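/- arXiv:2002.02218 — 6 statements merged into one kernel-verified Lean document; each statement's English description precedes it below -/
import Mathlib

section
/- If 1 ≤ i < j ≤ n and λ_i = λ_j, then ⟨E^{(0)}_{ij}, E^{(0)}_{ji}⟩ = (1/N)·(q_1 + ⋯ + q_{λ_i}) = (1/N)·(λ_1 + ⋯ + λ_{i−1} + (n − i + 1)·λ_i). -/
open Matrix BigOperators

/-- if `1 ≤ i < j ≤ n` and `λ_i = λ_j`, then
`⟨E^{(0)}_{ij}, E^{(0)}_{ji}⟩ = (1/N)·(q_1 + ⋯ + q_{λ_i})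
 = (1/N)·(λ_1 + ⋯ + λ_{i−1} + (n−i+1)λ_i)`,
where `⟨X,Y⟩ = (1/(2N))·tr(ad(π₀X) ∘ ad(π₀Y))` with `ad` the adjoint action of `𝔤_0`
on itself and `π₀` the projection onto `𝔤_0` killing `e_{ab}` with `col(a) ≠ col(b)`.
(Rows `i : Fin n` are indexed from `0`, so `n − i_paper + 1 = n − i` here.) -/
theorem form_value_Eij_Eji
    (n N : ℕ) (hn : 0 < n)
    (lam : Fin n → ℕ) (hpos : ∀ i, 0 < lam i) (hmono : Monotone lam)
    (hsum : ∑ i, lam i = N)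
    (row : Fin N → Fin n) (col : Fin N → ℕ)
    (hcol : ∀ a, col a < lam (row a))
    (horder : ∀ a b : Fin N, a < b ↔ (row a < row b ∨ (row a = row b ∧ col a < col b)))
    (E : Fin n → Fin n → ℕ → Matrix (Fin N) (Fin N) ℂ)
    (hE : ∀ i j r, E i j r = ∑ a : Fin N, ∑ b : Fin N,
      if row a = i ∧ row b = j ∧ col b = col a + r then Matrix.single a b 1 else 0)
    (g0 : Submodule ℂ (Matrix (Fin N) (Fin N) ℂ))
    (hg0 : g0 = Submodule.span ℂ
      {M | ∃ a b : Fin N, col a = col b ∧ M = Matrix.single a b 1})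
    (q : ℕ → ℕ) (hq : ∀ c, q c = (Finset.univ.filter fun k : Fin n => c ≤ lam k).card)
    (pi0 : Matrix (Fin N) (Fin N) ℂ → Matrix (Fin N) (Fin N) ℂ)
    (hpi0 : ∀ (X : Matrix (Fin N) (Fin N) ℂ) (a b : Fin N),
      pi0 X a b = if col a = col b then X a b else 0)
    (i j : Fin n) (hij : i < j) (hlam : lam i = lam j)
    (adX adY : Module.End ℂ ↥g0)
    (hadX : ∀ Z : ↥g0, ((adX Z : Matrix (Fin N) (Fin N) ℂ))
        = pi0 (E i j 0) * (Z : Matrix (Fin N) (Fin N) ℂ)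
          - (Z : Matrix (Fin N) (Fin N) ℂ) * pi0 (E i j 0))
    (hadY : ∀ Z : ↥g0, ((adY Z : Matrix (Fin N) (Fin N) ℂ))
        = pi0 (E j i 0) * (Z : Matrix (Fin N) (Fin N) ℂ)
          - (Z : Matrix (Fin N) (Fin N) ℂ) * pi0 (E j i 0)) :
    (1 / (2 * (N : ℂ))) * LinearMap.trace ℂ ↥g0 (adX ∘ₗ adY)
        = (1 / (N : ℂ)) * ∑ c ∈ Finset.Icc 1 (lam i), (q c : ℂ) ∧
    (1 / (N : ℂ)) * (∑ c ∈ Finset.Icc 1 (lam i), (q c : ℂ))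
        = (1 / (N : ℂ)) * ((∑ k ∈ Finset.univ.filter (fun k : Fin n => k < i), (lam k : ℂ))
            + ((n - (i : ℕ) : ℕ) : ℂ) * (lam i : ℂ)) := by
  classical
  have hij' : i ≠ j := ne_of_lt hij
  have hNpos : 0 < N := by
    rw [← hsum]
    exact Finset.sum_pos (fun k _ => hpos k) ⟨⟨0, hn⟩, Finset.mem_univ _⟩
  have hNC : (N : ℂ) ≠ 0 := Nat.cast_ne_zero.mpr hNpos.ne'
  -- injectivity of (row, col)
  have hinj : ∀ a b : Fin N, row a = row b → col a = col b → a = b := by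
    intro a b h1 h2
    rcases lt_trichotomy a b with h | h | h
    · rcases (horder a b).1 h with h' | h'
      · exact absurd h1 (ne_of_lt h')
      · exact absurd h2 (ne_of_lt h'.2)
    · exact h
    · rcases (horder b a).1 h with h' | h'
      · exact absurd h1.symm (ne_of_lt h')
      · exact absurd h2.symm (ne_of_lt h'.2)
  -- surjectivity
  have hexists : ∀ (k : Fin n) (c : ℕ), c < lam k → ∃ a, row a = k ∧ col a = c := by
    intro k c hc
    set φ : Fin N → Σ k : Fin n, Fin (lam k) := fun a => ⟨row a, ⟨col a, hcol a⟩⟩ with hφ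
    have hinjφ : Function.Injective φ := by
      intro a b h
      rw [Sigma.ext_iff] at h
      exact hinj a b h.1 ((Fin.heq_ext_iff (by rw [h.1])).1 h.2)
    have hcard : Fintype.card (Fin N) = Fintype.card (Σ k : Fin n, Fin (lam k)) := by
      simp [Fintype.card_sigma, hsum]
    have hbij := (Fintype.bijective_iff_injective_and_card φ).2 ⟨hinjφ, hcard⟩
    obtain ⟨a, ha⟩ := hbij.2 ⟨k, ⟨c, hc⟩⟩
    have h1 : row a = k := congrArg Sigma.fst ha
    refine ⟨a, h1, ?_⟩
    rw [Sigma.ext_iff] at ha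
    exact (Fin.heq_ext_iff (congrArg lam ha.1)).1 ha.2
  -- unique-count sum
  have hone : ∀ (k : Fin n) (c0 : ℕ), c0 < lam k →
      (∑ c : Fin N, (if row c = k ∧ col c = c0 then (1 : ℂ) else 0)) = 1 := by
    intro k c0 hc0
    obtain ⟨a0, h1, h2⟩ := hexists k c0 hc0
    rw [Finset.sum_eq_single a0]
    · rw [if_pos ⟨h1, h2⟩]
    · intro c _ hc
      rw [if_neg]
      rintro ⟨hr, hcc⟩
      exact hc (hinj c a0 (hr.trans h1.symm) (hcc.trans h2.symm))
    · intro h; exact absurd (Finset.mem_univ a0) h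
  -- entries of A and B
  set A := pi0 (E i j 0) with hA
  set B := pi0 (E j i 0) with hB
  have hentry : ∀ (k l : Fin n) (a b : Fin N), pi0 (E k l 0) a b
      = if row a = k ∧ row b = l ∧ col b = col a then (1 : ℂ) else 0 := by
    intro k l a b
    rw [hpi0, hE]
    by_cases hcc : col a = col b
    · rw [if_pos hcc]
      simp only [Matrix.sum_apply, add_zero]
      rw [Finset.sum_eq_single a]
      · rw [Finset.sum_eq_single b]
        · by_cases h : row a = k ∧ row b = l ∧ col b = col a
          · rw [if_pos h, if_pos h]; simp [Matrix.single]
          · rw [if_neg h, if_neg h]; simp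
        · intro y _ hy
          split
          · simp only [Matrix.single, of_apply, ite_eq_right_iff, one_ne_zero, imp_false,
              not_and]; intro _; exact hy
          · simp
        · intro h; exact absurd (Finset.mem_univ b) h
      · intro x _ hx
        rw [Finset.sum_eq_zero]
        intro y _
        split
        · simp only [Matrix.single, of_apply, ite_eq_right_iff, one_ne_zero, imp_false,
            not_and]; intro h; exact absurd h hx
        · simp
      · intro h; exact absurd (Finset.mem_univ a) h
    · rw [if_neg hcc, if_neg]
      rintro ⟨-, -, h⟩
      exact hcc h.symm
  have hAe : ∀ a b, A a b = if row a = i ∧ row b = j ∧ col b = col a then (1:ℂ) else 0 :=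
    hentry i j
  have hBe : ∀ a b, B a b = if row a = j ∧ row b = i ∧ col b = col a then (1:ℂ) else 0 :=
    hentry j i
  have hAdiag : ∀ a, A a a = 0 := by
    intro a; rw [hAe, if_neg]; rintro ⟨h1, h2, -⟩; exact hij' (h1 ▸ h2 ▸ rfl)
  have hBdiag : ∀ a, B a a = 0 := by
    intro a; rw [hBe, if_neg]; rintro ⟨h1, h2, -⟩; exact hij' (h2 ▸ h1 ▸ rfl)
  have hABaa : ∀ a, (A * B) a a = if row a = i then (1:ℂ) else 0 := by
    intro a
    rw [Matrix.mul_apply]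
    by_cases h : row a = i
    · rw [if_pos h]
      have hca : col a < lam j := by rw [← hlam, ← h]; exact hcol a
      rw [← hone j (col a) hca]
      refine Finset.sum_congr rfl fun c _ => ?_
      rw [hAe, hBe]
      by_cases hc : row c = j ∧ col c = col a
      · rw [if_pos hc, if_pos ⟨h, hc.1, hc.2⟩, if_pos ⟨hc.1, h, hc.2.symm⟩, mul_one]
      · rw [if_neg hc, if_neg (fun h => hc ⟨h.2.1, h.2.2⟩), zero_mul]
    · rw [if_neg h, Finset.sum_eq_zero]
      intro c _
      rw [hAe, if_neg, zero_mul]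
      rintro ⟨h1, -, -⟩; exact h h1
  have hBAbb : ∀ b, (B * A) b b = if row b = j then (1:ℂ) else 0 := by
    intro b
    rw [Matrix.mul_apply]
    by_cases h : row b = j
    · rw [if_pos h]
      have hcb : col b < lam i := by rw [hlam, ← h]; exact hcol b
      rw [← hone i (col b) hcb]
      refine Finset.sum_congr rfl fun c _ => ?_
      rw [hBe, hAe]
      by_cases hc : row c = i ∧ col c = col b
      · rw [if_pos hc, if_pos ⟨h, hc.1, hc.2⟩, if_pos ⟨hc.1, h, hc.2.symm⟩, mul_one]
      · rw [if_neg hc, if_neg (fun hx => hc ⟨hx.2.1, hx.2.2⟩), zero_mul]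
    · rw [if_neg h, Finset.sum_eq_zero]
      intro c _
      rw [hBe, if_neg, zero_mul]
      rintro ⟨h1, -, -⟩; exact h h1
  -- the projection as a linear map
  set LP : Matrix (Fin N) (Fin N) ℂ →ₗ[ℂ] Matrix (Fin N) (Fin N) ℂ :=
    { toFun := fun X => Matrix.of fun a b => if col a = col b then X a b else 0
      map_add' := by
        intro X Y; ext a b
        simp only [Matrix.of_apply, Matrix.add_apply]
        split <;> simp
      map_smul' := by
        intro r X; ext a b
        simp only [Matrix.of_apply, Matrix.smul_apply, RingHom.id_apply]
        split <;> simp } with hLPdef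
  have hLP : ∀ X a b, LP X a b = if col a = col b then X a b else 0 := fun X a b => rfl
  have hLPpi0 : ∀ X, LP X = pi0 X := by
    intro X; ext a b; rw [hLP, hpi0]
  have hmem : ∀ X, LP X ∈ g0 := by
    intro X
    rw [hg0]
    rw [Matrix.matrix_eq_sum_single (LP X)]
    refine Submodule.sum_mem _ fun a _ => Submodule.sum_mem _ fun b _ => ?_
    by_cases h : col a = col b
    · have : Matrix.single a b (LP X a b) = (LP X a b) • Matrix.single a b (1:ℂ) := by
        rw [Matrix.smul_single, smul_eq_mul, mul_one]
      rw [this]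
      exact Submodule.smul_mem _ _ (Submodule.subset_span ⟨a, b, h, rfl⟩)
    · have : LP X a b = 0 := by rw [hLP, if_neg h]
      rw [this, Matrix.single_zero]
      exact Submodule.zero_mem _
  have hfix : ∀ Z ∈ g0, LP Z = Z := by
    intro Z hZ
    rw [hg0] at hZ
    induction hZ using Submodule.span_induction with
    | mem M hM =>
      obtain ⟨a, b, hab, rfl⟩ := hM
      ext x y
      rw [hLP]
      by_cases h : col x = col y
      · rw [if_pos h]
      · rw [if_neg h]
        by_cases hx : x = a ∧ y = b
        · exact absurd (hx.1 ▸ hx.2 ▸ hab) h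
        · symm
          simp only [Matrix.single, of_apply, ite_eq_right_iff, one_ne_zero, imp_false]
          exact fun h => hx ⟨h.1.symm, h.2.symm⟩
    | zero => exact map_zero LP
    | add X Y _ _ hX hY => rw [map_add, hX, hY]
    | smul r X _ hX => rw [_root_.map_smul, hX]
  -- projection onto g0
  set Pg : Matrix (Fin N) (Fin N) ℂ →ₗ[ℂ] ↥g0 := LP.codRestrict g0 hmem with hPgdef
  have hPg : ∀ Z : ↥g0, Pg (Z : Matrix (Fin N) (Fin N) ℂ) = Z := by
    intro Z
    apply Subtype.ext
    exact hfix (Z : Matrix (Fin N) (Fin N) ℂ) Z.2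
  have hcomp : Pg ∘ₗ g0.subtype = LinearMap.id := LinearMap.ext fun Z => hPg Z
  set F : Module.End ℂ (Matrix (Fin N) (Fin N) ℂ) :=
    g0.subtype ∘ₗ ((adX ∘ₗ adY) ∘ₗ Pg) with hFdef
  have htr : LinearMap.trace ℂ ↥g0 (adX ∘ₗ adY)
      = LinearMap.trace ℂ (Matrix (Fin N) (Fin N) ℂ) F := by
    conv_lhs => rw [← LinearMap.comp_id (adX ∘ₗ adY), ← hcomp, ← LinearMap.comp_assoc]
    rw [LinearMap.trace_comp_comm' (g0.subtype) ((adX ∘ₗ adY) ∘ₗ Pg)]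
  -- value of F
  have hFval : ∀ M : Matrix (Fin N) (Fin N) ℂ,
      F M = A * (B * LP M - LP M * B) - (B * LP M - LP M * B) * A := by
    intro M
    have h1 : F M = ((adX (adY (Pg M)) : ↥g0) : Matrix (Fin N) (Fin N) ℂ) := rfl
    have h2 : ((Pg M : ↥g0) : Matrix (Fin N) (Fin N) ℂ) = LP M := rfl
    rw [h1, hadX, hadY, h2]
  -- basis and repr
  set bs := Matrix.stdBasis ℂ (Fin N) (Fin N) with hbs
  have hrepr : ∀ (M : Matrix (Fin N) (Fin N) ℂ) (p : Fin N × Fin N),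
      bs.repr M p = M p.1 p.2 := by
    intro M p
    have hM : M = ∑ x : Fin N, ∑ y : Fin N, M x y • bs (x, y) := by
      conv_lhs => rw [Matrix.matrix_eq_sum_single M]
      refine Finset.sum_congr rfl fun x _ => Finset.sum_congr rfl fun y _ => ?_
      rw [Matrix.stdBasis_eq_single, Matrix.smul_single, smul_eq_mul, mul_one]
    conv_lhs => rw [hM]
    simp only [map_sum, _root_.map_smul, Module.Basis.repr_self, Finsupp.coe_finset_sum,
      Finset.sum_apply, Finsupp.coe_smul, Pi.smul_apply, Finsupp.single_apply, smul_eq_mul]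
    rw [Finset.sum_eq_single p.1, Finset.sum_eq_single p.2]
    · simp
    · intro y _ hy; rw [if_neg (fun h => hy (congrArg Prod.snd h)), mul_zero]
    · simp
    · intro x _ hx
      rw [Finset.sum_eq_zero]
      intro y _; rw [if_neg (fun h => hx (congrArg Prod.fst h)), mul_zero]
    · simp
  have htrF : LinearMap.trace ℂ (Matrix (Fin N) (Fin N) ℂ) F
      = ∑ p : Fin N × Fin N, F (bs p) p.1 p.2 := by
    rw [LinearMap.trace_eq_matrix_trace ℂ bs, Matrix.trace]
    refine Finset.sum_congr rfl fun p _ => ?_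
    rw [Matrix.diag, LinearMap.toMatrix_apply, hrepr]
  -- entry of F at basis elements
  have hFentry : ∀ a c : Fin N, F (Matrix.single a c (1:ℂ)) a c
      = if col a = col c
        then ((if row a = i then (1:ℂ) else 0) + (if row c = j then (1:ℂ) else 0))
        else 0 := by
    intro a c
    rw [hFval]
    by_cases h : col a = col c
    · have hLPe : LP (Matrix.single a c (1:ℂ)) = Matrix.single a c 1 := by
        ext x y
        rw [hLP]
        by_cases hx : col x = col y
        · rw [if_pos hx]
        · rw [if_neg hx]
          symm
          simp only [Matrix.single, of_apply, ite_eq_right_iff, one_ne_zero, imp_false]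
          rintro ⟨rfl, rfl⟩
          exact hx h
      rw [if_pos h, hLPe]
      set e := Matrix.single a c (1:ℂ) with he
      have h1 : (A * (B * e)) a c = (A * B) a a := by
        rw [← Matrix.mul_assoc, he, Matrix.mul_single_apply_same, mul_one]
      have h2 : (A * (e * B)) a c = A a a * B c c := by
        rw [Matrix.mul_apply, Finset.sum_eq_single a]
        · rw [he, Matrix.single_mul_apply_same, one_mul]
        · intro x _ hx
          rw [he, Matrix.single_mul_apply_of_ne _ _ _ _ _ hx, mul_zero]
        · intro hh; exact absurd (Finset.mem_univ a) hh
      have h3 : ((B * e) * A) a c = B a a * A c c := by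
        rw [Matrix.mul_apply, Finset.sum_eq_single c]
        · rw [he, Matrix.mul_single_apply_same, mul_one]
        · intro y _ hy
          rw [he, Matrix.mul_single_apply_of_ne _ _ _ _ _ hy, zero_mul]
        · intro hh; exact absurd (Finset.mem_univ c) hh
      have h4 : ((e * B) * A) a c = (B * A) c c := by
        rw [Matrix.mul_apply, Matrix.mul_apply]
        refine Finset.sum_congr rfl fun y _ => ?_
        rw [he, Matrix.single_mul_apply_same, one_mul]
      rw [Matrix.sub_apply, Matrix.mul_sub, Matrix.sub_mul, Matrix.sub_apply, Matrix.sub_apply,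
        h1, h2, h3, h4, hAdiag a, hBdiag a, hABaa, hBAbb]
      ring
    · have hLPe : LP (Matrix.single a c (1:ℂ)) = 0 := by
        ext x y
        rw [hLP]
        by_cases hx : col x = col y
        · rw [if_pos hx]
          simp only [Matrix.single, of_apply, Matrix.zero_apply, ite_eq_right_iff, one_ne_zero,
            imp_false]
          rintro ⟨rfl, rfl⟩
          exact h hx
        · rw [if_neg hx, Matrix.zero_apply]
      rw [if_neg h, hLPe]
      simp
  -- counting
  have hcard : ∀ c0 : ℕ, (Finset.univ.filter fun b : Fin N => col b = c0).card = q (c0+1) := by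
    intro c0
    rw [hq]
    apply Finset.card_bij (fun b _ => row b)
    · intro b hb
      simp only [Finset.mem_filter, Finset.mem_univ, true_and] at hb ⊢
      rw [← hb]; exact hcol b
    · intro b1 h1 b2 h2 hr
      simp only [Finset.mem_filter, Finset.mem_univ, true_and] at h1 h2
      exact hinj _ _ hr (h1.trans h2.symm)
    · intro k hk
      simp only [Finset.mem_filter, Finset.mem_univ, true_and] at hk
      obtain ⟨a, h1, h2⟩ := hexists k c0 hk
      exact ⟨a, by simp [h2], h1⟩
  have hrowsum : ∀ k : Fin n,
      (∑ a : Fin N, if row a = k then (q (col a + 1) : ℂ) else 0)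
        = ∑ c ∈ Finset.Icc 1 (lam k), (q c : ℂ) := by
    intro k
    rw [← Finset.sum_filter]
    refine Finset.sum_bij (fun a _ => col a + 1) ?_ ?_ ?_ ?_
    · intro a ha
      simp only [Finset.mem_filter, Finset.mem_univ, true_and] at ha
      rw [Finset.mem_Icc]
      refine ⟨Nat.le_add_left 1 _, ?_⟩
      have := hcol a
      rw [ha] at this
      exact this
    · intro a1 h1 a2 h2 hc
      simp only [Finset.mem_filter, Finset.mem_univ, true_and] at h1 h2
      exact hinj _ _ (h1.trans h2.symm) (Nat.succ_injective hc)
    · intro c hc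
      rw [Finset.mem_Icc] at hc
      obtain ⟨a, h1, h2⟩ := hexists k (c-1) (by omega)
      refine ⟨a, by simp [h1], ?_⟩
      show col a + 1 = c
      omega
    · intro a ha; rfl
  have hT1 : (∑ a : Fin N, ∑ c : Fin N, if col a = col c ∧ row a = i then (1:ℂ) else 0)
      = ∑ c ∈ Finset.Icc 1 (lam i), (q c : ℂ) := by
    rw [← hrowsum i]
    refine Finset.sum_congr rfl fun a _ => ?_
    by_cases h : row a = i
    · rw [if_pos h]
      have he : (∑ c : Fin N, if col a = col c ∧ row a = i then (1:ℂ) else 0)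
          = ∑ c : Fin N, if col c = col a then (1:ℂ) else 0 := by
        refine Finset.sum_congr rfl fun c _ => ?_
        by_cases hc : col c = col a
        · rw [if_pos hc, if_pos ⟨hc.symm, h⟩]
        · rw [if_neg hc, if_neg (fun hx => hc hx.1.symm)]
      rw [he, Finset.sum_boole, hcard]
    · rw [if_neg h, Finset.sum_eq_zero]
      intro c _; rw [if_neg (fun hx => h hx.2)]
  have hT2 : (∑ a : Fin N, ∑ c : Fin N, if col a = col c ∧ row c = j then (1:ℂ) else 0)
      = ∑ c ∈ Finset.Icc 1 (lam i), (q c : ℂ) := by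
    rw [Finset.sum_comm, hlam, ← hrowsum j]
    refine Finset.sum_congr rfl fun c _ => ?_
    by_cases h : row c = j
    · rw [if_pos h]
      have he : (∑ a : Fin N, if col a = col c ∧ row c = j then (1:ℂ) else 0)
          = ∑ a : Fin N, if col a = col c then (1:ℂ) else 0 := by
        refine Finset.sum_congr rfl fun a _ => ?_
        by_cases hc : col a = col c
        · rw [if_pos hc, if_pos ⟨hc, h⟩]
        · rw [if_neg hc, if_neg (fun hx => hc hx.1)]
      rw [he, Finset.sum_boole, hcard]
    · rw [if_neg h, Finset.sum_eq_zero]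
      intro a _; rw [if_neg (fun hx => h hx.2)]
  have htrace : LinearMap.trace ℂ ↥g0 (adX ∘ₗ adY)
      = (∑ c ∈ Finset.Icc 1 (lam i), (q c : ℂ)) + ∑ c ∈ Finset.Icc 1 (lam i), (q c : ℂ) := by
    rw [htr, htrF, Fintype.sum_prod_type]
    have hstep : ∀ a c : Fin N, F (bs (a, c)) a c
        = (if col a = col c ∧ row a = i then (1:ℂ) else 0)
          + (if col a = col c ∧ row c = j then (1:ℂ) else 0) := by
      intro a c
      rw [hbs, Matrix.stdBasis_eq_single, hFentry]
      by_cases h : col a = col c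
      · rw [if_pos h]
        by_cases h1 : row a = i <;> by_cases h2 : row c = j <;> simp [h, h1, h2]
      · rw [if_neg h]
        simp [h]
    calc (∑ a : Fin N, ∑ c : Fin N, F (bs (a, c)) a c)
        = ∑ a : Fin N, ∑ c : Fin N, ((if col a = col c ∧ row a = i then (1:ℂ) else 0)
            + (if col a = col c ∧ row c = j then (1:ℂ) else 0)) :=
          Finset.sum_congr rfl fun a _ => Finset.sum_congr rfl fun c _ => hstep a c
      _ = (∑ a : Fin N, ∑ c : Fin N, if col a = col c ∧ row a = i then (1:ℂ) else 0)
            + ∑ a : Fin N, ∑ c : Fin N, if col a = col c ∧ row c = j then (1:ℂ) else 0 := by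
          simp [Finset.sum_add_distrib]
      _ = _ := by rw [hT1, hT2]
  constructor
  · rw [htrace]
    field_simp
    ring
  · -- second identity, proved in ℕ first
    have hnat : (∑ c ∈ Finset.Icc 1 (lam i), q c)
        = (∑ k ∈ Finset.univ.filter (fun k : Fin n => k < i), lam k) + (n - (i:ℕ)) * lam i := by
      have h1 : (∑ c ∈ Finset.Icc 1 (lam i), q c)
          = ∑ k : Fin n, min (lam i) (lam k) := by
        have : ∀ c, q c = ∑ k : Fin n, if c ≤ lam k then 1 else 0 := by
          intro c; rw [hq, Finset.card_filter]
        rw [Finset.sum_congr rfl fun c _ => this c, Finset.sum_comm]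
        refine Finset.sum_congr rfl fun k _ => ?_
        rw [← Finset.card_filter]
        have hfe : (Finset.Icc 1 (lam i)).filter (fun c => c ≤ lam k)
            = Finset.Icc 1 (min (lam i) (lam k)) := by
          ext c
          simp only [Finset.mem_filter, Finset.mem_Icc, le_min_iff]
          omega
        rw [hfe, Nat.card_Icc]
        omega
      rw [h1, ← Finset.sum_filter_add_sum_filter_not Finset.univ (fun k : Fin n => k < i)]
      have h2 : (∑ k ∈ Finset.univ.filter (fun k : Fin n => k < i), min (lam i) (lam k))
          = ∑ k ∈ Finset.univ.filter (fun k : Fin n => k < i), lam k := by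
        refine Finset.sum_congr rfl fun k hk => ?_
        simp only [Finset.mem_filter, Finset.mem_univ, true_and] at hk
        exact min_eq_right (hmono (le_of_lt hk))
      have h3 : (∑ k ∈ Finset.univ.filter (fun k : Fin n => ¬ k < i), min (lam i) (lam k))
          = (n - (i:ℕ)) * lam i := by
        have hconst : ∀ k ∈ Finset.univ.filter (fun k : Fin n => ¬ k < i),
            min (lam i) (lam k) = lam i := by
          intro k hk
          simp only [Finset.mem_filter, Finset.mem_univ, true_and, not_lt] at hk
          exact min_eq_left (hmono hk)
        rw [Finset.sum_congr rfl hconst, Finset.sum_const, smul_eq_mul]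
        congr 1
        have hlt : (Finset.univ.filter fun k : Fin n => k < i).card = (i:ℕ) := by
          have : (Finset.univ.filter fun k : Fin n => k < i) = Finset.Iio i := by
            ext k; simp
          rw [this, Fin.card_Iio]
        have := Finset.card_filter_add_card_filter_not
          (s := (Finset.univ : Finset (Fin n))) (fun k : Fin n => k < i)
        rw [Finset.card_univ, Fintype.card_fin, hlt] at this
        omega
      rw [h2, h3]
    congr 1
    have hcast : (∑ c ∈ Finset.Icc 1 (lam i), (q c : ℂ))
        = ((∑ c ∈ Finset.Icc 1 (lam i), q c : ℕ) : ℂ) := by push_cast; rfl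
    rw [hcast, hnat]
    push_cast
    rfl
end

section
/- For all 1 ≤ i, j ≤ n, ⟨E^{(0)}_{ii}, E^{(0)}_{jj}⟩ = (1/N)·( δ_{ij}·(λ_1 + ⋯ + λ_{i−1} + (n − i + 1)·λ_i) − min(λ_i, λ_j) ). -/
open Matrix BigOperators

lemma trace_of_eigenbasis {R M ι : Type*} [CommRing R] [AddCommGroup M] [Module R M]
    [Fintype ι] [DecidableEq ι] (B : Module.Basis ι R M) (f : M →ₗ[R] M) (μ : ι → R)
    (h : ∀ p, f (B p) = μ p • B p) :
    LinearMap.trace R M f = ∑ p, μ p := by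
  rw [LinearMap.trace_eq_matrix_trace R B f, Matrix.trace]
  refine Finset.sum_congr rfl fun p _ => ?_
  rw [Matrix.diag, LinearMap.toMatrix_apply, h p, _root_.map_smul]
  simp [Module.Basis.repr_self]


/-- for all `1 ≤ i,j ≤ n`,
`⟨E^{(0)}_{ii}, E^{(0)}_{jj}⟩ = (1/N)·(δ_{ij}(λ_1+⋯+λ_{i−1}+(n−i+1)λ_i) − min(λ_i,λ_j))`,
where `⟨X,Y⟩ = (1/(2N))·tr(ad(π₀X) ∘ ad(π₀Y))` with `ad` the adjoint action of `𝔤_0`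
on itself and `π₀` the projection onto `𝔤_0` killing `e_{ab}` with `col(a) ≠ col(b)`.
(Rows `i : Fin n` are indexed from `0`, so `n − i_paper + 1 = n − i` here.) -/
theorem form_value_Eii_Ejj
    (n N : ℕ) (hn : 0 < n)
    (lam : Fin n → ℕ) (hpos : ∀ i, 0 < lam i) (hmono : Monotone lam)
    (hsum : ∑ i, lam i = N)
    (row : Fin N → Fin n) (col : Fin N → ℕ)
    (hcol : ∀ a, col a < lam (row a))
    (horder : ∀ a b : Fin N, a < b ↔ (row a < row b ∨ (row a = row b ∧ col a < col b)))
    (E : Fin n → Fin n → ℕ → Matrix (Fin N) (Fin N) ℂ)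
    (hE : ∀ i j r, E i j r = ∑ a : Fin N, ∑ b : Fin N,
      if row a = i ∧ row b = j ∧ col b = col a + r then Matrix.single a b 1 else 0)
    (g0 : Submodule ℂ (Matrix (Fin N) (Fin N) ℂ))
    (hg0 : g0 = Submodule.span ℂ
      {M | ∃ a b : Fin N, col a = col b ∧ M = Matrix.single a b 1})
    (pi0 : Matrix (Fin N) (Fin N) ℂ → Matrix (Fin N) (Fin N) ℂ)
    (hpi0 : ∀ (X : Matrix (Fin N) (Fin N) ℂ) (a b : Fin N),
      pi0 X a b = if col a = col b then X a b else 0)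
    (i j : Fin n)
    (adX adY : Module.End ℂ ↥g0)
    (hadX : ∀ Z : ↥g0, ((adX Z : Matrix (Fin N) (Fin N) ℂ))
        = pi0 (E i i 0) * (Z : Matrix (Fin N) (Fin N) ℂ)
          - (Z : Matrix (Fin N) (Fin N) ℂ) * pi0 (E i i 0))
    (hadY : ∀ Z : ↥g0, ((adY Z : Matrix (Fin N) (Fin N) ℂ))
        = pi0 (E j j 0) * (Z : Matrix (Fin N) (Fin N) ℂ)
          - (Z : Matrix (Fin N) (Fin N) ℂ) * pi0 (E j j 0)) :
    (1 / (2 * (N : ℂ))) * LinearMap.trace ℂ ↥g0 (adX ∘ₗ adY)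
      = (1 / (N : ℂ)) *
          ((if i = j then
              ((∑ k ∈ Finset.univ.filter (fun k : Fin n => k < i), (lam k : ℂ))
                + ((n - (i : ℕ) : ℕ) : ℂ) * (lam i : ℂ))
            else 0)
            - ((min (lam i) (lam j) : ℕ) : ℂ)) := by
  classical
  -- injectivity of (row, col)
  have hinj : ∀ a b : Fin N, row a = row b → col a = col b → a = b := by
    intro a b h1 h2
    rcases lt_trichotomy a b with h | h | h
    · rw [horder] at h
      rcases h with h | ⟨_, h⟩
      · exact absurd h (by rw [h1]; exact lt_irrefl _)
      · omega
    · exact h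
    · rw [horder] at h
      rcases h with h | ⟨_, h⟩
      · exact absurd h (by rw [h1]; exact lt_irrefl _)
      · omega
  -- the diagonal matrices
  set d : Fin n → Fin N → ℂ := fun k a => if row a = k then 1 else 0 with hd
  have hEntry : ∀ (k : Fin n) (x y : Fin N), E k k 0 x y
      = if row x = k ∧ row y = k ∧ col y = col x then (1:ℂ) else 0 := by
    intro k x y
    rw [hE]
    simp only [Matrix.sum_apply, Nat.add_zero]
    have hterm : ∀ a b : Fin N,
        (if row a = k ∧ row b = k ∧ col b = col a then Matrix.single a b (1:ℂ) else 0) x y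
        = if a = x then (if b = y then
            (if row a = k ∧ row b = k ∧ col b = col a then (1:ℂ) else 0) else 0) else 0 := by
      intro a b
      rcases eq_or_ne a x with rfl | h1
      · rcases eq_or_ne b y with rfl | h2
        · simp [Matrix.single, apply_ite (fun M : Matrix (Fin N) (Fin N) ℂ => M a b)]
        · simp [Matrix.single, h2, apply_ite (fun M : Matrix (Fin N) (Fin N) ℂ => M a y)]
      · simp [Matrix.single, h1, apply_ite (fun M : Matrix (Fin N) (Fin N) ℂ => M x y),
          Ne.symm h1]
    simp only [hterm]
    rw [Finset.sum_eq_single_of_mem x (Finset.mem_univ x) (fun b _ hb => by simp [hb]),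
        Finset.sum_eq_single_of_mem y (Finset.mem_univ y) (fun a _ ha => by simp [ha])]
    simp
  have hD : ∀ k : Fin n, pi0 (E k k 0) = Matrix.diagonal (d k) := by
    intro k
    ext x y
    rw [hpi0, hEntry]
    by_cases hxy : x = y
    · subst hxy; simp [Matrix.diagonal, hd]
    · rw [Matrix.diagonal_apply_ne _ hxy]
      by_cases hc : col x = col y
      · rw [if_pos hc, if_neg]
        rintro ⟨h1, h2, h3⟩
        exact hxy (hinj x y (h1.trans h2.symm) hc)
      · rw [if_neg hc]
  -- bracket with diagonal
  have hbr : ∀ (k : Fin n) (a b : Fin N),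
      Matrix.diagonal (d k) * Matrix.single a b 1
        - Matrix.single a b 1 * Matrix.diagonal (d k)
      = (d k a - d k b) • Matrix.single a b 1 := by
    intro k a b
    ext x y
    simp only [Matrix.sub_apply, Matrix.diagonal_mul, Matrix.mul_diagonal,
      Matrix.smul_apply, Matrix.single, Matrix.of_apply, smul_eq_mul]
    by_cases h : a = x ∧ b = y
    · obtain ⟨rfl, rfl⟩ := h; simp
    · simp [h]
  -- basis of g0
  let v : {p : Fin N × Fin N // col p.1 = col p.2} → Matrix (Fin N) (Fin N) ℂ := fun p => Matrix.single p.1.1 p.1.2 1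
  have hli : LinearIndependent ℂ v := by
    have h2 : LinearIndependent ℂ (fun p : {p : Fin N × Fin N // col p.1 = col p.2} => Matrix.stdBasis ℂ (Fin N) (Fin N) p.1) :=
      (Matrix.stdBasis ℂ (Fin N) (Fin N)).linearIndependent.comp (fun p : {p : Fin N × Fin N // col p.1 = col p.2} => p.1)
        (fun p q h => Subtype.ext h)
    have : v = fun p : {p : Fin N × Fin N // col p.1 = col p.2} => Matrix.stdBasis ℂ (Fin N) (Fin N) p.1 := by
      funext p
      rw [show p.1 = (p.1.1, p.1.2) from rfl, Matrix.stdBasis_eq_single]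
    rw [this]
    exact h2
  have hrange : Set.range v = {M | ∃ a b : Fin N, col a = col b ∧ M = Matrix.single a b 1} := by
    ext M
    constructor
    · rintro ⟨p, rfl⟩; exact ⟨p.1.1, p.1.2, p.2, rfl⟩
    · rintro ⟨a, b, hab, rfl⟩; exact ⟨⟨(a, b), hab⟩, rfl⟩
  have hg0' : g0 = Submodule.span ℂ (Set.range v) := by rw [hg0, hrange]
  let B : Module.Basis {p : Fin N × Fin N // col p.1 = col p.2} ℂ ↥g0 := (Module.Basis.span hli).map (LinearEquiv.ofEq _ _ hg0'.symm)
  have hB : ∀ p : {p : Fin N × Fin N // col p.1 = col p.2}, (B p : Matrix (Fin N) (Fin N) ℂ) = v p := by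
    intro p
    show ((LinearEquiv.ofEq _ _ hg0'.symm) ((Module.Basis.span hli) p) : Matrix (Fin N) (Fin N) ℂ) = v p
    rw [LinearEquiv.coe_ofEq_apply, Module.Basis.span_apply]
  set cX : {p : Fin N × Fin N // col p.1 = col p.2} → ℂ := fun p => d i p.1.1 - d i p.1.2 with hcX
  set cY : {p : Fin N × Fin N // col p.1 = col p.2} → ℂ := fun p => d j p.1.1 - d j p.1.2 with hcY
  have hXB : ∀ p : {p : Fin N × Fin N // col p.1 = col p.2}, adX (B p) = cX p • B p := by
    intro p
    apply Subtype.ext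
    rw [Submodule.coe_smul, hadX, hD, hB]
    exact hbr i p.1.1 p.1.2
  have hYB : ∀ p : {p : Fin N × Fin N // col p.1 = col p.2}, adY (B p) = cY p • B p := by
    intro p
    apply Subtype.ext
    rw [Submodule.coe_smul, hadY, hD, hB]
    exact hbr j p.1.1 p.1.2
  have htrace : LinearMap.trace ℂ ↥g0 (adX ∘ₗ adY) = ∑ p : {p : Fin N × Fin N // col p.1 = col p.2}, cX p * cY p := by
    refine trace_of_eigenbasis B _ _ (fun p => ?_)
    rw [LinearMap.comp_apply, hYB p, _root_.map_smul, hXB p, smul_smul, mul_comm]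
  -- reindexing boxes by (row, col)
  let e : Fin N → Σ _ : Fin n, ℕ := fun a => ⟨row a, col a⟩
  have he_inj : Function.Injective e := by
    intro a b h
    obtain ⟨h1, h2⟩ := Sigma.mk.inj_iff.mp h
    exact hinj a b h1 (eq_of_heq h2)
  let T : Finset (Σ _ : Fin n, ℕ) := Finset.univ.sigma fun k => Finset.range (lam k)
  have himg : Finset.univ.image e = T := by
    apply Finset.eq_of_subset_of_card_le
    · intro q hq
      simp only [Finset.mem_image] at hq
      obtain ⟨a, _, rfl⟩ := hq
      simpa [T, Finset.mem_sigma] using hcol a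
    · have h1 : T.card = N := by simp [T, Finset.card_sigma, hsum]
      have h2 : (Finset.univ.image e).card = N := by
        rw [Finset.card_image_of_injective _ he_inj]; simp
      omega
  have hre : ∀ F : (Σ _ : Fin n, ℕ) → ℂ, ∑ q ∈ T, F q = ∑ a : Fin N, F (e a) := by
    intro F
    rw [← himg, Finset.sum_image (fun a _ b _ h => he_inj h)]
  -- the scalar function
  set h : Fin n → Fin n → ℂ := fun k l =>
    ((if k = i then (1:ℂ) else 0) - (if l = i then 1 else 0)) *
    ((if k = j then (1:ℂ) else 0) - (if l = j then 1 else 0)) with hh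
  set G : (Σ _ : Fin n, ℕ) → (Σ _ : Fin n, ℕ) → ℂ :=
    fun q q' => if q.2 = q'.2 then h q.1 q'.1 else 0 with hG
  have step1 : (∑ p : {p : Fin N × Fin N // col p.1 = col p.2}, cX p * cY p)
      = ∑ p ∈ Finset.univ.filter (fun p : Fin N × Fin N => col p.1 = col p.2),
          (d i p.1 - d i p.2) * (d j p.1 - d j p.2) :=
    (Finset.sum_subtype (p := fun p : Fin N × Fin N => col p.1 = col p.2) _
      (fun x => by simp)
      (fun p : Fin N × Fin N => (d i p.1 - d i p.2) * (d j p.1 - d j p.2))).symm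
  have hsum1 : ∑ p : {p : Fin N × Fin N // col p.1 = col p.2}, cX p * cY p = ∑ a : Fin N, ∑ b : Fin N, G (e a) (e b) := by
    rw [step1, Finset.sum_filter, Fintype.sum_prod_type]
  set m : Fin n → Fin n → ℂ := fun k l => ((min (lam k) (lam l) : ℕ) : ℂ) with hm
  have key : ∀ k l : Fin n, (∑ c ∈ Finset.range (lam k), ∑ dd ∈ Finset.range (lam l),
      (if c = dd then h k l else 0)) = m k l * h k l := by
    intro k l
    have h1 : ∀ c : ℕ, (∑ dd ∈ Finset.range (lam l), if c = dd then h k l else 0)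
        = if c ∈ Finset.range (lam l) then h k l else 0 := fun c => Finset.sum_ite_eq _ c _
    simp_rw [h1]
    rw [Finset.sum_ite_mem, Finset.sum_const]
    have h2 : Finset.range (lam k) ∩ Finset.range (lam l)
        = Finset.range (min (lam k) (lam l)) := by
      ext c; simp [Nat.lt_min]
    rw [h2, Finset.card_range, nsmul_eq_mul, hm]
  have hTT : (∑ q ∈ T, ∑ q' ∈ T, G q q') = ∑ k : Fin n, ∑ l : Fin n, m k l * h k l := by
    rw [Finset.sum_sigma]
    refine Finset.sum_congr rfl fun k _ => ?_
    calc (∑ c ∈ Finset.range (lam k), ∑ q' ∈ T, G ⟨k, c⟩ q')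
        = ∑ c ∈ Finset.range (lam k), ∑ l : Fin n, ∑ dd ∈ Finset.range (lam l),
            (if c = dd then h k l else 0) := by
          refine Finset.sum_congr rfl fun c _ => ?_
          rw [Finset.sum_sigma]
      _ = ∑ l : Fin n, ∑ c ∈ Finset.range (lam k), ∑ dd ∈ Finset.range (lam l),
            (if c = dd then h k l else 0) := Finset.sum_comm
      _ = ∑ l : Fin n, m k l * h k l := Finset.sum_congr rfl fun l _ => key k l
  have hm' : ∀ k l : Fin n, m k l = ((min (lam k) (lam l) : ℕ) : ℂ) := fun _ _ => rfl
  have hdelta : ∀ (t : Fin n) (C : Fin n → ℂ),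
      (∑ k : Fin n, (if k = t then (1:ℂ) else 0) * C k) = C t := by
    intro t C
    simp [ite_mul, Finset.sum_ite_eq']
  have hstep : ∀ F : Fin n → Fin n → ℂ,
      (∑ k : Fin n, ∑ l : Fin n,
        ((if k = i then (1:ℂ) else 0) - (if l = i then 1 else 0)) * F k l)
      = (∑ l : Fin n, F i l) - ∑ k : Fin n, F k i := by
    intro F
    simp_rw [sub_mul, Finset.sum_sub_distrib]
    congr 1
    · simp_rw [← Finset.mul_sum]
      exact hdelta i (fun k => ∑ l : Fin n, F k l)
    · rw [Finset.sum_comm]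
      simp_rw [← Finset.mul_sum]
      exact hdelta i (fun l => ∑ k : Fin n, F k l)
  have hfour : (∑ k : Fin n, ∑ l : Fin n, m k l * h k l)
      = 2 * (if i = j then ∑ l : Fin n, m i l else 0) - 2 * m i j := by
    have h0 : ∀ k l : Fin n, m k l * h k l
        = ((if k = i then (1:ℂ) else 0) - (if l = i then 1 else 0)) *
            ((((if k = j then (1:ℂ) else 0) - (if l = j then 1 else 0))) * m k l) := by
      intro k l
      simp only [hh]
      ring
    simp_rw [h0]
    rw [hstep (fun k l => (((if k = j then (1:ℂ) else 0) - (if l = j then 1 else 0))) * m k l)]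
    have h2 : (∑ l : Fin n, ((if i = j then (1:ℂ) else 0) - (if l = j then 1 else 0)) * m i l)
        = (if i = j then ∑ l : Fin n, m i l else 0) - m i j := by
      simp_rw [sub_mul, Finset.sum_sub_distrib]
      congr 1
      · split_ifs with hij <;> simp
      · exact hdelta j (fun l => m i l)
    have h3 : (∑ k : Fin n, ((if k = j then (1:ℂ) else 0) - (if i = j then 1 else 0)) * m k i)
        = m j i - (if i = j then ∑ k : Fin n, m k i else 0) := by
      simp_rw [sub_mul, Finset.sum_sub_distrib]
      congr 1
      · exact hdelta j (fun k => m k i)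
      · split_ifs with hij <;> simp
    rw [h2, h3]
    have h4 : m j i = m i j := by rw [hm' j i, hm' i j, Nat.min_comm]
    have h5 : (∑ k : Fin n, m k i) = ∑ l : Fin n, m i l :=
      Finset.sum_congr rfl fun k _ => by rw [hm' k i, hm' i k, Nat.min_comm]
    rw [h4, h5]
    ring
  -- row sums of min
  have hrowsum : (∑ l : Fin n, m i l)
      = (∑ k ∈ Finset.univ.filter (fun k : Fin n => k < i), (lam k : ℂ))
        + ((n - (i : ℕ) : ℕ) : ℂ) * (lam i : ℂ) := by
    rw [← Finset.sum_filter_add_sum_filter_not Finset.univ (fun l : Fin n => l < i)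
        (fun l => m i l)]
    congr 1
    · refine Finset.sum_congr rfl fun l hl => ?_
      simp only [Finset.mem_filter] at hl
      rw [hm' i l, min_eq_right (hmono hl.2.le)]
    · have hval : ∀ l ∈ Finset.univ.filter (fun l : Fin n => ¬ l < i),
          m i l = (lam i : ℂ) := by
        intro l hl
        simp only [Finset.mem_filter, not_lt] at hl
        rw [hm' i l, min_eq_left (hmono hl.2)]
      rw [Finset.sum_congr rfl hval, Finset.sum_const]
      have hcard : (Finset.univ.filter (fun l : Fin n => ¬ l < i)).card = n - (i : ℕ) := by
        have h1 : (Finset.univ.filter (fun l : Fin n => l < i)).card = (i : ℕ) := by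
          have : Finset.univ.filter (fun l : Fin n => l < i) = Finset.Iio i := by
            ext l; simp
          rw [this, Fin.card_Iio]
        have h2 := Finset.card_filter_add_card_filter_not
          (s := (Finset.univ : Finset (Fin n))) (p := fun l : Fin n => l < i)
        simp only [Finset.card_univ, Fintype.card_fin] at h2
        omega
      rw [hcard, nsmul_eq_mul]
  have hN : (N : ℂ) ≠ 0 := by
    have h0 : 0 < N := by
      rw [← hsum]
      exact Finset.sum_pos (fun k _ => hpos k) ⟨i, Finset.mem_univ i⟩
    exact Nat.cast_ne_zero.mpr h0.ne'
  have hsum2 : (∑ q ∈ T, ∑ q' ∈ T, G q q') = ∑ a : Fin N, ∑ b : Fin N, G (e a) (e b) := by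
    rw [hre (fun q => ∑ q' ∈ T, G q q')]
    exact Finset.sum_congr rfl fun a _ => hre (G (e a))
  rw [htrace, hsum1, ← hsum2, hTT, hfour, hrowsum, hm' i j]
  by_cases hij : i = j
  · simp only [if_pos hij]
    field_simp
  · simp only [if_neg hij]
    field_simp
end

section
/- The bilinear form ⟨·,·⟩ on the centralizer 𝔞 is symmetric and invariant: for all X, Y, Z ∈ 𝔞, ⟨X,Y⟩ = ⟨Y,X⟩ and ⟨[Z,X], Y⟩ + ⟨X, [Z,Y]⟩ = 0. -/
open Matrix BigOperators

/-- the bilinear form `⟨X,Y⟩ = (1/(2N))·tr(ad(π₀X) ∘ ad(π₀Y))` on the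
centralizer `𝔞` of `e` is symmetric and invariant: for all `X, Y, Z ∈ 𝔞` we have
`⟨X,Y⟩ = ⟨Y,X⟩` and `⟨[Z,X],Y⟩ + ⟨X,[Z,Y]⟩ = 0`. -/
theorem form_symmetric_invariant
    (n N : ℕ) (hn : 0 < n)
    (lam : Fin n → ℕ) (hpos : ∀ i, 0 < lam i) (hmono : Monotone lam)
    (hsum : ∑ i, lam i = N)
    (row : Fin N → Fin n) (col : Fin N → ℕ)
    (hcol : ∀ a, col a < lam (row a))
    (horder : ∀ a b : Fin N, a < b ↔ (row a < row b ∨ (row a = row b ∧ col a < col b)))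
    (e : Matrix (Fin N) (Fin N) ℂ)
    (he : e = ∑ a : Fin N, ∑ b : Fin N,
      if (b : ℕ) = (a : ℕ) + 1 ∧ row a = row b then single a b 1 else 0)
    (g0 : Submodule ℂ (Matrix (Fin N) (Fin N) ℂ))
    (hg0 : g0 = Submodule.span ℂ
      {M | ∃ a b : Fin N, col a = col b ∧ M = single a b 1})
    (pi0 : Matrix (Fin N) (Fin N) ℂ → Matrix (Fin N) (Fin N) ℂ)
    (hpi0 : ∀ (X : Matrix (Fin N) (Fin N) ℂ) (a b : Fin N),
      pi0 X a b = if col a = col b then X a b else 0)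
    (B : Matrix (Fin N) (Fin N) ℂ → Matrix (Fin N) (Fin N) ℂ → ℂ)
    (hB : ∀ (X Y : Matrix (Fin N) (Fin N) ℂ) (adX adY : Module.End ℂ ↥g0),
      (∀ Z : ↥g0, ((adX Z : Matrix (Fin N) (Fin N) ℂ))
          = pi0 X * (Z : Matrix (Fin N) (Fin N) ℂ)
            - (Z : Matrix (Fin N) (Fin N) ℂ) * pi0 X) →
      (∀ Z : ↥g0, ((adY Z : Matrix (Fin N) (Fin N) ℂ))
          = pi0 Y * (Z : Matrix (Fin N) (Fin N) ℂ)
            - (Z : Matrix (Fin N) (Fin N) ℂ) * pi0 Y) →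
      B X Y = (1 / (2 * (N : ℂ))) * LinearMap.trace ℂ ↥g0 (adX ∘ₗ adY)) :
    ∀ X Y Z : Matrix (Fin N) (Fin N) ℂ,
      X ∈ Subalgebra.centralizer ℂ ({e} : Set (Matrix (Fin N) (Fin N) ℂ)) →
      Y ∈ Subalgebra.centralizer ℂ ({e} : Set (Matrix (Fin N) (Fin N) ℂ)) →
      Z ∈ Subalgebra.centralizer ℂ ({e} : Set (Matrix (Fin N) (Fin N) ℂ)) →
      B X Y = B Y X ∧ B (Z * X - X * Z) Y + B X (Z * Y - Y * Z) = 0 := by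
  classical
  -- abbreviation for the matrix space
  -- entry formula for e
  have he_app : ∀ x y : Fin N, e x y
      = if ((y:ℕ) = (x:ℕ) + 1 ∧ row x = row y) then 1 else 0 := by
    intro x y
    rw [he]
    simp only [Matrix.sum_apply]
    rw [Finset.sum_eq_single x]
    · rw [Finset.sum_eq_single y]
      · by_cases h : (y:ℕ) = (x:ℕ) + 1 ∧ row x = row y
        · simp [h]
        · simp [h]
      · intro b _ hb
        by_cases h : (b:ℕ) = (x:ℕ) + 1 ∧ row x = row b
        · simp [h, single_apply_of_ne, hb]
        · simp [h]
      · simp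
    · intro a _ ha
      apply Finset.sum_eq_zero
      intro b _
      by_cases h : (b:ℕ) = (a:ℕ) + 1 ∧ row a = row b
      · simp only [h, if_true]
        exact single_apply_of_ne _ _ _ _ _ (by tauto)
      · simp [h]
    · simp
  -- the labelling a ↦ (row a, col a) is bijective onto the pyramid
  have hbij : Function.Bijective
      (fun a : Fin N => (⟨row a, ⟨col a, hcol a⟩⟩ : Σ i : Fin n, Fin (lam i))) := by
    rw [Fintype.bijective_iff_injective_and_card]
    constructor
    · intro a b hab
      have h1 : row a = row b := congrArg Sigma.fst hab
      have h2 : col a = col b := congrArg (fun p : (Σ i : Fin n, Fin (lam i)) => (p.2 : ℕ)) hab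
      rcases lt_trichotomy a b with h | h | h
      · rcases (horder a b).1 h with hr | ⟨-, hc⟩
        · rw [h1] at hr; exact absurd hr (lt_irrefl _)
        · omega
      · exact h
      · rcases (horder b a).1 h with hr | ⟨-, hc⟩
        · rw [h1] at hr; exact absurd hr (lt_irrefl _)
        · omega
    · simp [Fintype.card_sigma, hsum]
  have hsurj : ∀ (i : Fin n) (c : ℕ), c < lam i → ∃ a : Fin N, row a = i ∧ col a = c := by
    intro i c hc
    obtain ⟨a, ha⟩ := hbij.2 ⟨i, ⟨c, hc⟩⟩
    exact ⟨a, congrArg Sigma.fst ha,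
      congrArg (fun p : (Σ i : Fin n, Fin (lam i)) => (p.2 : ℕ)) ha⟩
  -- predecessor in a row
  have hpred : ∀ a : Fin N, 0 < col a →
      ∃ a' : Fin N, row a' = row a ∧ col a' = col a - 1 ∧ (a':ℕ) + 1 = (a:ℕ) := by
    intro a ha
    obtain ⟨a', hra, hca⟩ := hsurj (row a) (col a - 1)
      (lt_of_le_of_lt (Nat.sub_le _ _) (hcol a))
    have hlt : a' < a := (horder a' a).2 (Or.inr ⟨hra, by omega⟩)
    refine ⟨a', hra, hca, ?_⟩
    by_contra hne
    have hlt2 : (a':ℕ) + 1 < (a:ℕ) := by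
      have := Fin.lt_iff_val_lt_val.1 hlt; omega
    set x : Fin N := ⟨(a':ℕ) + 1, lt_trans hlt2 a.isLt⟩ with hx
    have h1 : a' < x := by simp [Fin.lt_iff_val_lt_val, hx]
    have h2 : x < a := by simp [Fin.lt_iff_val_lt_val, hx]; omega
    rcases (horder a' x).1 h1 with hr | ⟨hre, hc⟩ <;>
      rcases (horder x a).1 h2 with hr2 | ⟨hre2, hc2⟩
    · rw [hra] at hr; exact absurd (hr.trans hr2) (lt_irrefl _)
    · rw [hra, ← hre2] at hr; exact absurd hr (lt_irrefl _)
    · rw [← hre, hra] at hr2; exact absurd hr2 (lt_irrefl _)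
    · omega
  -- consecutive boxes in the same row have consecutive columns
  have hsucc : ∀ c b : Fin N, (b:ℕ) = (c:ℕ) + 1 → row c = row b → col b = col c + 1 := by
    intro c b hb hr
    have hcb : c < b := Fin.lt_iff_val_lt_val.2 (by omega)
    have hcol_lt : col c < col b := by
      rcases (horder c b).1 hcb with h | ⟨-, h⟩
      · rw [hr] at h; exact absurd h (lt_irrefl _)
      · exact h
    by_contra hne
    have hlt : col c + 1 < col b := by omega
    obtain ⟨x, hrx, hcx⟩ := hsurj (row b) (col c + 1) (lt_trans hlt (hcol b))
    have h1 : c < x := (horder c x).2 (Or.inr ⟨by rw [hr, hrx], by omega⟩)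
    have h2 : x < b := (horder x b).2 (Or.inr ⟨hrx, by omega⟩)
    have := Fin.lt_iff_val_lt_val.1 h1
    have := Fin.lt_iff_val_lt_val.1 h2
    omega
  -- centralizer elements are supported in nonnegative column degrees
  have lower : ∀ W : Matrix (Fin N) (Fin N) ℂ, e * W = W * e →
      ∀ a b : Fin N, col b < col a → W a b = 0 := by
    intro W hW
    suffices h : ∀ m : ℕ, ∀ a b : Fin N, col b = m → col b < col a → W a b = 0 by
      intro a b hab; exact h (col b) a b rfl hab
    intro m
    induction m using Nat.strong_induction_on with
    | _ m IH =>
      intro a b hcb hlt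
      obtain ⟨a', hra, hca, hval⟩ := hpred a (lt_of_le_of_lt (Nat.zero_le _) hlt)
      have h1 : (e * W) a' b = W a b := by
        rw [Matrix.mul_apply]
        rw [Finset.sum_eq_single a]
        · rw [he_app]
          rw [if_pos ⟨hval.symm, hra⟩, one_mul]
        · intro c _ hc
          rw [he_app]
          rw [if_neg, zero_mul]
          rintro ⟨h1, -⟩
          exact hc (Fin.ext (by omega))
        · simp
      have h2 : (W * e) a' b = 0 := by
        rw [Matrix.mul_apply]
        apply Finset.sum_eq_zero
        intro c _
        rw [he_app]
        by_cases h : (b:ℕ) = (c:ℕ) + 1 ∧ row c = row b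
        · have hc1 : col b = col c + 1 := hsucc c b h.1 h.2
          have : W a' c = 0 := by
            apply IH (col c) (by omega) a' c rfl
            omega
          rw [this, zero_mul]
        · rw [if_neg h, mul_zero]
      rw [← h1, hW, h2]
  -- membership in g0 is equivalent to support on equal columns
  have hg0mem : ∀ M : Matrix (Fin N) (Fin N) ℂ,
      M ∈ g0 ↔ ∀ x y : Fin N, col x ≠ col y → M x y = 0 := by
    intro M
    constructor
    · intro hM
      rw [hg0] at hM
      induction hM using Submodule.span_induction with
      | mem M hM =>
        obtain ⟨a, b, hab, rfl⟩ := hM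
        intro x y hxy
        apply single_apply_of_ne
        rintro ⟨rfl, rfl⟩
        exact hxy hab
      | zero => intro x y _; simp
      | add M₁ M₂ _ _ h1 h2 => intro x y hxy; simp [Matrix.add_apply, h1 x y hxy, h2 x y hxy]
      | smul c M₁ _ h1 => intro x y hxy; simp [Matrix.smul_apply, h1 x y hxy]
    · intro hM
      rw [hg0, Matrix.matrix_eq_sum_single M]
      apply Submodule.sum_mem
      intro x _
      apply Submodule.sum_mem
      intro y _
      by_cases hxy : col x = col y
      · have : single x y (M x y) = (M x y) • single x y 1 := by
          simp
        rw [this]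
        exact Submodule.smul_mem _ _ (Submodule.subset_span ⟨x, y, hxy, rfl⟩)
      · rw [hM x y hxy, single_zero]
        exact Submodule.zero_mem _
  -- support property is closed under multiplication
  have hPmul : ∀ A C : Matrix (Fin N) (Fin N) ℂ,
      (∀ x y : Fin N, col x ≠ col y → A x y = 0) →
      (∀ x y : Fin N, col x ≠ col y → C x y = 0) →
      ∀ x y : Fin N, col x ≠ col y → (A * C) x y = 0 := by
    intro A C hA hC x y hxy
    rw [Matrix.mul_apply]
    apply Finset.sum_eq_zero
    intro c _
    by_cases h : col x = col c
    · rw [hC c y (by rw [← h]; exact hxy), mul_zero]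
    · rw [hA x c h, zero_mul]
  have hpi0P : ∀ (M : Matrix (Fin N) (Fin N) ℂ) (x y : Fin N),
      col x ≠ col y → pi0 M x y = 0 := by
    intro M x y hxy; rw [hpi0, if_neg hxy]
  -- the bracket with pi0 X preserves g0
  have hmemg0 : ∀ (M : Matrix (Fin N) (Fin N) ℂ) (W : ↥g0),
      pi0 M * (W : Matrix (Fin N) (Fin N) ℂ)
        - (W : Matrix (Fin N) (Fin N) ℂ) * pi0 M ∈ g0 := by
    intro M W
    rw [hg0mem]
    intro x y hxy
    have hW := (hg0mem (W : Matrix (Fin N) (Fin N) ℂ)).1 W.2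
    rw [Matrix.sub_apply, hPmul _ _ (hpi0P M) hW x y hxy,
      hPmul _ _ hW (hpi0P M) x y hxy, sub_zero]
  -- the adjoint operators
  let adE : Matrix (Fin N) (Fin N) ℂ → Module.End ℂ ↥g0 := fun M =>
    { toFun := fun W => ⟨pi0 M * (W : Matrix (Fin N) (Fin N) ℂ)
        - (W : Matrix (Fin N) (Fin N) ℂ) * pi0 M, hmemg0 M W⟩
      map_add' := by
        intro W₁ W₂
        apply Subtype.ext
        simp only [Submodule.coe_add]
        noncomm_ring
      map_smul' := by
        intro c W
        apply Subtype.ext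
        simp only [Submodule.coe_smul, RingHom.id_apply]
        rw [Matrix.mul_smul, Matrix.smul_mul, smul_sub] }
  have hadE : ∀ (M : Matrix (Fin N) (Fin N) ℂ) (W : ↥g0),
      ((adE M W : Matrix (Fin N) (Fin N) ℂ))
        = pi0 M * (W : Matrix (Fin N) (Fin N) ℂ)
          - (W : Matrix (Fin N) (Fin N) ℂ) * pi0 M := fun M W => rfl
  have hBeq : ∀ X Y : Matrix (Fin N) (Fin N) ℂ,
      B X Y = (1 / (2 * (N : ℂ))) * LinearMap.trace ℂ ↥g0 (adE X ∘ₗ adE Y) :=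
    fun X Y => hB X Y (adE X) (adE Y) (hadE X) (hadE Y)
  -- pi0 is a Lie algebra homomorphism on the centralizer
  have hkey : ∀ U V : Matrix (Fin N) (Fin N) ℂ, e * U = U * e → e * V = V * e →
      pi0 (U * V - V * U) = pi0 U * pi0 V - pi0 V * pi0 U := by
    intro U V hU hV
    ext a b
    rw [hpi0]
    by_cases hab : col a = col b
    · rw [if_pos hab, Matrix.sub_apply, Matrix.sub_apply, Matrix.mul_apply, Matrix.mul_apply,
        Matrix.mul_apply, Matrix.mul_apply, ← Finset.sum_sub_distrib, ← Finset.sum_sub_distrib]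
      apply Finset.sum_congr rfl
      intro c _
      by_cases hc : col a = col c
      · rw [hpi0, hpi0, hpi0, hpi0, if_pos hc, if_pos hc,
          if_pos (by rw [← hc, hab]), if_pos (by rw [← hc, hab])]
      · rcases Nat.lt_or_ge (col c) (col a) with h | h
        · rw [lower U hU a c h, lower V hV a c h, hpi0P U a c hc, hpi0P V a c hc]
          ring
        · have h' : col b < col c := by omega
          have hcb : col c ≠ col b := by omega
          rw [lower U hU c b h', lower V hV c b h', hpi0P U c b hcb, hpi0P V c b hcb]
          ring
    · rw [if_neg hab, Matrix.sub_apply,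
        hPmul _ _ (hpi0P U) (hpi0P V) a b hab, hPmul _ _ (hpi0P V) (hpi0P U) a b hab,
        sub_zero]
  -- bracket compatibility of adE
  have hadbr : ∀ U V : Matrix (Fin N) (Fin N) ℂ, e * U = U * e → e * V = V * e →
      adE (U * V - V * U) = adE U ∘ₗ adE V - adE V ∘ₗ adE U := by
    intro U V hU hV
    apply LinearMap.ext
    intro W
    apply Subtype.ext
    have h1 : ((adE (U * V - V * U)) W : Matrix (Fin N) (Fin N) ℂ)
        = pi0 (U * V - V * U) * (W : Matrix (Fin N) (Fin N) ℂ)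
          - (W : Matrix (Fin N) (Fin N) ℂ) * pi0 (U * V - V * U) := rfl
    rw [h1, hkey U V hU hV]
    have h2 : (((adE U ∘ₗ adE V - adE V ∘ₗ adE U) W) : Matrix (Fin N) (Fin N) ℂ)
        = (pi0 U * ((adE V W : Matrix (Fin N) (Fin N) ℂ))
            - ((adE V W : Matrix (Fin N) (Fin N) ℂ)) * pi0 U)
          - (pi0 V * ((adE U W : Matrix (Fin N) (Fin N) ℂ))
            - ((adE U W : Matrix (Fin N) (Fin N) ℂ)) * pi0 V) := rfl
    rw [h2, hadE, hadE]
    noncomm_ring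
  -- now the main statements
  intro X Y Z hX hY hZ
  have hXe : e * X = X * e := Subalgebra.mem_centralizer_iff ℂ |>.1 hX e rfl
  have hYe : e * Y = Y * e := Subalgebra.mem_centralizer_iff ℂ |>.1 hY e rfl
  have hZe : e * Z = Z * e := Subalgebra.mem_centralizer_iff ℂ |>.1 hZ e rfl
  constructor
  · rw [hBeq, hBeq, LinearMap.trace_comp_comm' (adE Y) (adE X)]
  · rw [hBeq, hBeq, hadbr Z X hZe hXe, hadbr Z Y hZe hYe]
    have h3 : (adE Z ∘ₗ adE X - adE X ∘ₗ adE Z) ∘ₗ adE Y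
        = adE Z ∘ₗ (adE X ∘ₗ adE Y) - adE X ∘ₗ (adE Z ∘ₗ adE Y) := by
      refine LinearMap.ext fun W => rfl
    have h4 : adE X ∘ₗ (adE Z ∘ₗ adE Y - adE Y ∘ₗ adE Z)
        = adE X ∘ₗ (adE Z ∘ₗ adE Y) - (adE X ∘ₗ adE Y) ∘ₗ adE Z := by
      refine LinearMap.ext fun W => ?_
      show (adE X) ((adE Z ∘ₗ adE Y) W - (adE Y ∘ₗ adE Z) W)
        = (adE X) ((adE Z ∘ₗ adE Y) W) - (adE X) ((adE Y ∘ₗ adE Z) W)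
      rw [map_sub]
    have tsub : ∀ f g : Module.End ℂ ↥g0,
        LinearMap.trace ℂ ↥g0 (f - g) = LinearMap.trace ℂ ↥g0 f - LinearMap.trace ℂ ↥g0 g :=
      fun f g => map_sub _ f g
    rw [h3, h4, tsub, tsub, LinearMap.trace_comp_comm' (adE X ∘ₗ adE Y) (adE Z)]
    ring
end

section
/- Set 𝔫₋ = span{E^{(r)}_{ij} : i > j}, 𝔥 = span{E^{(r)}_{ii}} and 𝔫₊ = span{E^{(r)}_{ij} : i < j}, with r ranging over all admissible values. Then 𝔫₋, 𝔥 and 𝔫₊ are Lie subalgebras of the centralizer 𝔞, the subalgebra 𝔥 is abelian, and 𝔞 = 𝔫₋ ⊕ 𝔥 ⊕ 𝔫₊ as a direct sum of vector spaces. -/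
open Matrix BigOperators

/-- with `𝔫₋ = span{E^{(r)}_{ij} : i > j}`, `𝔥 = span{E^{(r)}_{ii}}` and
`𝔫₊ = span{E^{(r)}_{ij} : i < j}` (`r` running over admissible values), the three
subspaces are Lie subalgebras of the centralizer `𝔞`, `𝔥` is abelian, and
`𝔞 = 𝔫₋ ⊕ 𝔥 ⊕ 𝔫₊` as a direct sum of vector spaces. -/
theorem triangular_decomposition
    (n N : ℕ) (hn : 0 < n)
    (lam : Fin n → ℕ) (hpos : ∀ i, 0 < lam i) (hmono : Monotone lam)
    (hsum : ∑ i, lam i = N)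
    (row : Fin N → Fin n) (col : Fin N → ℕ)
    (hcol : ∀ a, col a < lam (row a))
    (horder : ∀ a b : Fin N, a < b ↔ (row a < row b ∨ (row a = row b ∧ col a < col b)))
    (e : Matrix (Fin N) (Fin N) ℂ)
    (he : e = ∑ a : Fin N, ∑ b : Fin N,
      if (b : ℕ) = (a : ℕ) + 1 ∧ row a = row b then Matrix.single a b 1 else 0)
    (E : Fin n → Fin n → ℕ → Matrix (Fin N) (Fin N) ℂ)
    (hE : ∀ i j r, E i j r = ∑ a : Fin N, ∑ b : Fin N,
      if row a = i ∧ row b = j ∧ col b = col a + r then Matrix.single a b 1 else 0)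
    (nminus hdiag nplus : Submodule ℂ (Matrix (Fin N) (Fin N) ℂ))
    (hnm : nminus = Submodule.span ℂ {M | ∃ (i j : Fin n) (r : ℕ),
      j < i ∧ lam j - min (lam i) (lam j) ≤ r ∧ r < lam j ∧ M = E i j r})
    (hhd : hdiag = Submodule.span ℂ {M | ∃ (i : Fin n) (r : ℕ),
      r < lam i ∧ M = E i i r})
    (hnp : nplus = Submodule.span ℂ {M | ∃ (i j : Fin n) (r : ℕ),
      i < j ∧ lam j - min (lam i) (lam j) ≤ r ∧ r < lam j ∧ M = E i j r}) :
    (∀ X Y : Matrix (Fin N) (Fin N) ℂ, X ∈ nminus → Y ∈ nminus → X * Y - Y * X ∈ nminus) ∧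
    (∀ X Y : Matrix (Fin N) (Fin N) ℂ, X ∈ hdiag → Y ∈ hdiag → X * Y - Y * X ∈ hdiag) ∧
    (∀ X Y : Matrix (Fin N) (Fin N) ℂ, X ∈ nplus → Y ∈ nplus → X * Y - Y * X ∈ nplus) ∧
    (∀ X Y : Matrix (Fin N) (Fin N) ℂ, X ∈ hdiag → Y ∈ hdiag → X * Y = Y * X) ∧
    nminus ≤ Subalgebra.toSubmodule
      (Subalgebra.centralizer ℂ ({e} : Set (Matrix (Fin N) (Fin N) ℂ))) ∧
    hdiag ≤ Subalgebra.toSubmodule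
      (Subalgebra.centralizer ℂ ({e} : Set (Matrix (Fin N) (Fin N) ℂ))) ∧
    nplus ≤ Subalgebra.toSubmodule
      (Subalgebra.centralizer ℂ ({e} : Set (Matrix (Fin N) (Fin N) ℂ))) ∧
    nminus ⊓ (hdiag ⊔ nplus) = ⊥ ∧
    hdiag ⊓ (nminus ⊔ nplus) = ⊥ ∧
    nplus ⊓ (nminus ⊔ hdiag) = ⊥ ∧
    nminus ⊔ hdiag ⊔ nplus = Subalgebra.toSubmodule
      (Subalgebra.centralizer ℂ ({e} : Set (Matrix (Fin N) (Fin N) ℂ))) := by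
  -- injectivity
  have hinj : ∀ a b : Fin N, row a = row b → col a = col b → a = b := by
    intro a b h1 h2
    by_contra hne
    rcases Ne.lt_or_gt hne with h | h
    · rcases (horder a b).1 h with h' | h'
      · exact absurd h1 (ne_of_lt h')
      · omega
    · rcases (horder b a).1 h with h' | h'
      · exact absurd h1.symm (ne_of_lt h')
      · omega
  -- box existence
  have hbox : ∀ (i : Fin n) (c : ℕ), c < lam i → ∃ a : Fin N, row a = i ∧ col a = c := by
    have hinj' : Function.Injective
        (fun a : Fin N => (⟨row a, ⟨col a, hcol a⟩⟩ : Σ i : Fin n, Fin (lam i))) := by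
      intro a b hab
      have h1 : row a = row b := congrArg Sigma.fst hab
      have h2 : col a = col b := by
        have := congrArg (fun x : (Σ i : Fin n, Fin (lam i)) => (x.2 : ℕ)) hab
        simpa using this
      exact hinj a b h1 h2
    have hcard : Fintype.card (Σ i : Fin n, Fin (lam i)) = Fintype.card (Fin N) := by
      simp [Fintype.card_sigma, hsum]
    have hsurj : Function.Surjective
        (fun a : Fin N => (⟨row a, ⟨col a, hcol a⟩⟩ : Σ i : Fin n, Fin (lam i))) := by
      have := (Fintype.bijective_iff_injective_and_card _).2 ⟨hinj', hcard.symm⟩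
      exact this.2
    intro i c hc
    obtain ⟨a, ha⟩ := hsurj ⟨i, ⟨c, hc⟩⟩
    refine ⟨a, ?_, ?_⟩
    · exact congrArg Sigma.fst ha
    · have := congrArg (fun x : (Σ i : Fin n, Fin (lam i)) => (x.2 : ℕ)) ha
      simpa using this
  -- entry formula
  have hEapp : ∀ i j r (a b : Fin N), E i j r a b =
      if row a = i ∧ row b = j ∧ col b = col a + r then 1 else 0 := by
    intro i j r a b
    rw [hE]
    simp only [Matrix.sum_apply]
    rw [Finset.sum_eq_single a]
    · rw [Finset.sum_eq_single b]
      · by_cases h : row a = i ∧ row b = j ∧ col b = col a + r <;> simp [h]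
      · intro b' _ hb'
        by_cases h : row a = i ∧ row b' = j ∧ col b' = col a + r <;>
          simp [h, Matrix.single_apply_of_ne, hb']
      · simp
    · intro a' _ ha'
      apply Finset.sum_eq_zero
      intro b' _
      by_cases h : row a' = i ∧ row b' = j ∧ col b' = col a' + r <;>
        simp [h, Matrix.single_apply_of_ne, ha']
    · simp
  choose box boxrow boxcol using hbox
  have hEzero : ∀ (i j : Fin n) (r : ℕ), lam j ≤ r → E i j r = 0 := by
    intro i j r h
    ext a b
    rw [hEapp, Matrix.zero_apply, if_neg]
    rintro ⟨h1, h2, h3⟩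
    have := hcol b
    rw [h2] at this
    omega
  have hmul : ∀ (i j l : Fin n) (r s : ℕ), lam l ≤ lam j + s →
      E i j r * E j l s = E i l (r + s) := by
    intro i j l r s hs
    ext a c
    simp only [Matrix.mul_apply, hEapp]
    by_cases h : row a = i ∧ row c = l ∧ col c = col a + (r + s)
    · have hb : col a + r < lam j := by
        have := hcol c
        rw [h.2.1] at this
        omega
      rw [Finset.sum_eq_single (box j (col a + r) hb)]
      · rw [if_pos ⟨h.1, boxrow _ _ _, boxcol _ _ _⟩,
          if_pos ⟨boxrow _ _ _, h.2.1, by rw [boxcol]; omega⟩, if_pos h]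
        norm_num
      · intro b' _ hb'
        by_cases h1 : row a = i ∧ row b' = j ∧ col b' = col a + r
        · exact absurd (hinj b' _ (by rw [h1.2.1, boxrow]) (by rw [h1.2.2, boxcol])) hb'
        · rw [if_neg h1, zero_mul]
      · simp
    · rw [if_neg h]
      apply Finset.sum_eq_zero
      intro b _
      by_cases h1 : row a = i ∧ row b = j ∧ col b = col a + r
      · rw [if_pos h1]
        by_cases h2 : row b = j ∧ row c = l ∧ col c = col b + s
        · exact absurd ⟨h1.1, h2.2.1, by omega⟩ h
        · rw [if_neg h2, mul_zero]
      · rw [if_neg h1, zero_mul]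
  have hmul0 : ∀ (i j k l : Fin n) (r s : ℕ), j ≠ k → E i j r * E k l s = 0 := by
    intro i j k l r s hjk
    ext a c
    simp only [Matrix.mul_apply, hEapp, Matrix.zero_apply]
    apply Finset.sum_eq_zero
    intro b _
    by_cases h1 : row a = i ∧ row b = j ∧ col b = col a + r
    · rw [if_pos h1]
      by_cases h2 : row b = k ∧ row c = l ∧ col c = col b + s
      · exact absurd (h1.2.1 ▸ h2.1) hjk
      · rw [if_neg h2, mul_zero]
    · rw [if_neg h1, zero_mul]
  have heapp : ∀ a b : Fin N, e a b =
      if (b : ℕ) = (a : ℕ) + 1 ∧ row a = row b then 1 else 0 := by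
    intro a b
    rw [he]
    simp only [Matrix.sum_apply]
    rw [Finset.sum_eq_single a]
    · rw [Finset.sum_eq_single b]
      · by_cases h : (b : ℕ) = (a : ℕ) + 1 ∧ row a = row b <;> simp [h]
      · intro b' _ hb'
        by_cases h : (b' : ℕ) = (a : ℕ) + 1 ∧ row a = row b' <;>
          simp [h, Matrix.single_apply_of_ne, hb']
      · simp
    · intro a' _ ha'
      apply Finset.sum_eq_zero
      intro b' _
      by_cases h : (b' : ℕ) = (a' : ℕ) + 1 ∧ row a' = row b' <;>
        simp [h, Matrix.single_apply_of_ne, ha']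
    · simp
  have hsucc : ∀ a b : Fin N, ((b : ℕ) = (a : ℕ) + 1 ∧ row a = row b) ↔
      (row a = row b ∧ col b = col a + 1) := by
    intro a b
    constructor
    · rintro ⟨h1, h2⟩
      refine ⟨h2, ?_⟩
      have hab : a < b := by rw [Fin.lt_def]; omega
      rcases (horder a b).1 hab with h' | h'
      · exact absurd h2 (ne_of_lt h')
      by_contra hne
      have hcb : col a + 1 < col b := by omega
      have hc1 : col a + 1 < lam (row a) := by
        have := hcol b
        rw [← h2] at this
        omega
      have hac : a < box (row a) (col a + 1) hc1 :=
        (horder _ _).2 (Or.inr ⟨(boxrow _ _ _).symm, by rw [boxcol]; omega⟩)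
      have hcb2 : box (row a) (col a + 1) hc1 < b :=
        (horder _ _).2 (Or.inr ⟨by rw [boxrow, h2], by rw [boxcol]; omega⟩)
      rw [Fin.lt_def] at hac hcb2
      omega
    · rintro ⟨h2, h3⟩
      refine ⟨?_, h2⟩
      have hab : a < b := (horder a b).2 (Or.inr ⟨h2, by omega⟩)
      rw [Fin.lt_def] at hab
      by_contra hne
      have hab2 : (a : ℕ) + 1 < (b : ℕ) := by omega
      set c : Fin N := ⟨(a : ℕ) + 1, lt_trans hab2 b.isLt⟩ with hcdef
      have hac : a < c := by rw [Fin.lt_def]; simp [hcdef]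
      have hcb : c < b := by rw [Fin.lt_def]; simpa [hcdef] using hab2
      rcases (horder a c).1 hac with h' | h' <;> rcases (horder c b).1 hcb with h'' | h''
      · exact absurd (h'.trans h'') (by simp [h2])
      · exact absurd (h''.1 ▸ h') (by simp [h2])
      · exact absurd (h'.1 ▸ h'') (by simp [h2])
      · omega
  have he2 : e = ∑ k : Fin n, E k k 1 := by
    ext a b
    rw [heapp]
    simp only [Matrix.sum_apply]
    have hEapp' : ∀ k : Fin n, E k k 1 a b =
        if row a = k ∧ row b = k ∧ col b = col a + 1 then 1 else 0 := fun k => hEapp k k 1 a b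
    rw [Finset.sum_eq_single (row a)]
    · rw [hEapp']
      by_cases h : row a = row b ∧ col b = col a + 1
      · rw [if_pos ((hsucc a b).2 h), if_pos (⟨rfl, h.1.symm, h.2⟩ :
          row a = row a ∧ row b = row a ∧ col b = col a + 1)]
      · rw [if_neg (fun hc => h ((hsucc a b).1 hc)), if_neg]
        rintro ⟨-, hrb, hcb⟩
        exact h ⟨hrb.symm, hcb⟩
    · intro k _ hk
      rw [hEapp', if_neg]
      rintro ⟨h1, -, -⟩
      exact hk h1.symm
    · simp
  have hcomme : ∀ (i j : Fin n) (r : ℕ), lam j ≤ lam i + r → e * E i j r = E i j r * e := by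
    intro i j r h
    rw [he2, Finset.sum_mul, Finset.mul_sum]
    rw [Finset.sum_eq_single i, Finset.sum_eq_single j]
    · rw [hmul i i j 1 r h, hmul i j j r 1 (by omega)]
      rw [Nat.add_comm 1 r]
    · intro k _ hk
      exact hmul0 i j k k r 1 hk.symm
    · simp
    · intro k _ hk
      exact hmul0 k k i j 1 r hk
    · simp
  -- bracket span helper
  have hbr : ∀ (S : Set (Matrix (Fin N) (Fin N) ℂ)),
      (∀ x ∈ S, ∀ y ∈ S, x * y - y * x ∈ Submodule.span ℂ S) →
      ∀ X ∈ Submodule.span ℂ S, ∀ Y ∈ Submodule.span ℂ S,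
        X * Y - Y * X ∈ Submodule.span ℂ S := by
    intro S hS X hX Y hY
    induction hX, hY using Submodule.span_induction₂ with
    | mem_mem x y hx hy => exact hS x hx y hy
    | zero_left y hy => simpa using Submodule.zero_mem _
    | zero_right x hx => simpa using Submodule.zero_mem _
    | add_left x y z hx hy hz h1 h2 =>
        have h : (x + y) * z - z * (x + y) = (x * z - z * x) + (y * z - z * y) := by
          noncomm_ring
        rw [h]; exact Submodule.add_mem _ h1 h2
    | add_right x y z hx hy hz h1 h2 =>
        have h : x * (y + z) - (y + z) * x = (x * y - y * x) + (x * z - z * x) := by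
          noncomm_ring
        rw [h]; exact Submodule.add_mem _ h1 h2
    | smul_left c x y hx hy h =>
        have h' : (c • x) * y - y * (c • x) = c • (x * y - y * x) := by
          simp [smul_sub, smul_mul_assoc, mul_smul_comm]
        rw [h']; exact Submodule.smul_mem _ _ h
    | smul_right c x y hx hy h =>
        have h' : x * (c • y) - (c • y) * x = c • (x * y - y * x) := by
          simp [smul_sub, smul_mul_assoc, mul_smul_comm]
        rw [h']; exact Submodule.smul_mem _ _ h
  -- commutativity span helper
  have hcmh : ∀ (S : Set (Matrix (Fin N) (Fin N) ℂ)),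
      (∀ x ∈ S, ∀ y ∈ S, x * y = y * x) →
      ∀ X ∈ Submodule.span ℂ S, ∀ Y ∈ Submodule.span ℂ S, X * Y = Y * X := by
    intro S hS X hX Y hY
    induction hX, hY using Submodule.span_induction₂ with
    | mem_mem x y hx hy => exact hS x hx y hy
    | zero_left y hy => simp
    | zero_right x hx => simp
    | add_left x y z _ _ _ h1 h2 => rw [add_mul, mul_add, h1, h2]
    | add_right x y z _ _ _ h1 h2 => rw [mul_add, add_mul, h1, h2]
    | smul_left c x y _ _ h => rw [smul_mul_assoc, mul_smul_comm, h]
    | smul_right c x y _ _ h => rw [mul_smul_comm, smul_mul_assoc, h]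
  -- vanishing helper
  have hvan : ∀ (S : Set (Matrix (Fin N) (Fin N) ℂ)) (P : Fin N → Fin N → Prop),
      (∀ M ∈ S, ∀ a b, M a b ≠ 0 → P a b) →
      ∀ X ∈ Submodule.span ℂ S, ∀ a b, ¬ P a b → X a b = 0 := by
    intro S P hS X hX
    induction hX using Submodule.span_induction with
    | mem x hx => intro a b hp; by_contra h0; exact hp (hS x hx a b h0)
    | zero => intro a b _; simp
    | add x y hx hy h1 h2 =>
        intro a b hp
        rw [Matrix.add_apply, h1 a b hp, h2 a b hp, add_zero]
    | smul c x hx h =>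
        intro a b hp
        rw [Matrix.smul_apply, h a b hp, smul_zero]
  have hvm : ∀ X ∈ nminus, ∀ a b : Fin N, ¬ row b < row a → X a b = 0 := by
    rw [hnm]
    apply hvan
    rintro M ⟨i, j, r, hji, -, -, rfl⟩ a b hM
    rw [hEapp] at hM
    by_cases h : row a = i ∧ row b = j ∧ col b = col a + r
    · rw [h.1, h.2.1]; exact hji
    · simp [h] at hM
  have hvh : ∀ X ∈ hdiag, ∀ a b : Fin N, ¬ row a = row b → X a b = 0 := by
    rw [hhd]
    apply hvan
    rintro M ⟨i, r, -, rfl⟩ a b hM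
    rw [hEapp] at hM
    by_cases h : row a = i ∧ row b = i ∧ col b = col a + r
    · rw [h.1, h.2.1]
    · simp [h] at hM
  have hvp : ∀ X ∈ nplus, ∀ a b : Fin N, ¬ row a < row b → X a b = 0 := by
    rw [hnp]
    apply hvan
    rintro M ⟨i, j, r, hij, -, -, rfl⟩ a b hM
    rw [hEapp] at hM
    by_cases h : row a = i ∧ row b = j ∧ col b = col a + r
    · rw [h.1, h.2.1]; exact hij
    · simp [h] at hM
  -- intersections
  have hint1 : nminus ⊓ (hdiag ⊔ nplus) = ⊥ := by
    rw [eq_bot_iff]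
    intro X hX
    rw [Submodule.mem_inf] at hX
    obtain ⟨hX1, hX2⟩ := hX
    rw [Submodule.mem_sup] at hX2
    obtain ⟨Y, hY, Z, hZ, hYZ⟩ := hX2
    rw [Submodule.mem_bot]
    ext a b
    rw [Matrix.zero_apply]
    by_cases h : row b < row a
    · rw [← hYZ, Matrix.add_apply, hvh Y hY a b (ne_of_gt h), hvp Z hZ a b (lt_asymm h),
        add_zero]
    · exact hvm X hX1 a b h
  have hint2 : hdiag ⊓ (nminus ⊔ nplus) = ⊥ := by
    rw [eq_bot_iff]
    intro X hX
    rw [Submodule.mem_inf] at hX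
    obtain ⟨hX1, hX2⟩ := hX
    rw [Submodule.mem_sup] at hX2
    obtain ⟨Y, hY, Z, hZ, hYZ⟩ := hX2
    rw [Submodule.mem_bot]
    ext a b
    rw [Matrix.zero_apply]
    by_cases h : row a = row b
    · rw [← hYZ, Matrix.add_apply, hvm Y hY a b (by rw [h]; exact lt_irrefl _),
        hvp Z hZ a b (by rw [h]; exact lt_irrefl _), add_zero]
    · exact hvh X hX1 a b h
  have hint3 : nplus ⊓ (nminus ⊔ hdiag) = ⊥ := by
    rw [eq_bot_iff]
    intro X hX
    rw [Submodule.mem_inf] at hX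
    obtain ⟨hX1, hX2⟩ := hX
    rw [Submodule.mem_sup] at hX2
    obtain ⟨Y, hY, Z, hZ, hYZ⟩ := hX2
    rw [Submodule.mem_bot]
    ext a b
    rw [Matrix.zero_apply]
    by_cases h : row a < row b
    · rw [← hYZ, Matrix.add_apply, hvm Y hY a b (lt_asymm h), hvh Z hZ a b (ne_of_lt h),
        add_zero]
    · exact hvp X hX1 a b h
  -- centralizer
  have hcentle : ∀ (S : Set (Matrix (Fin N) (Fin N) ℂ)), (∀ M ∈ S, e * M = M * e) →
      Submodule.span ℂ S ≤ Subalgebra.toSubmodule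
        (Subalgebra.centralizer ℂ ({e} : Set (Matrix (Fin N) (Fin N) ℂ))) := by
    intro S hS
    rw [Submodule.span_le]
    intro M hM
    simp only [SetLike.mem_coe, Subalgebra.mem_toSubmodule, Subalgebra.mem_centralizer_iff]
    intro g hg
    rw [Set.mem_singleton_iff] at hg
    subst hg
    exact hS M hM
  have hcent1 : nminus ≤ Subalgebra.toSubmodule
      (Subalgebra.centralizer ℂ ({e} : Set (Matrix (Fin N) (Fin N) ℂ))) := by
    rw [hnm]; apply hcentle
    rintro M ⟨i, j, r, hji, h1, h2, rfl⟩
    exact hcomme i j r (by omega)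
  have hcent2 : hdiag ≤ Subalgebra.toSubmodule
      (Subalgebra.centralizer ℂ ({e} : Set (Matrix (Fin N) (Fin N) ℂ))) := by
    rw [hhd]; apply hcentle
    rintro M ⟨i, r, hr, rfl⟩
    exact hcomme i i r (by omega)
  have hcent3 : nplus ≤ Subalgebra.toSubmodule
      (Subalgebra.centralizer ℂ ({e} : Set (Matrix (Fin N) (Fin N) ℂ))) := by
    rw [hnp]; apply hcentle
    rintro M ⟨i, j, r, hij, h1, h2, rfl⟩
    exact hcomme i j r (by omega)
  -- closure under bracket for strict triangular parts
  have hclos : ∀ (ρ : Fin n → Fin n → Prop), (∀ {i j k : Fin n}, ρ i j → ρ j k → ρ i k) →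
      ∀ X ∈ Submodule.span ℂ {M | ∃ (i j : Fin n) (r : ℕ),
        ρ j i ∧ lam j - min (lam i) (lam j) ≤ r ∧ r < lam j ∧ M = E i j r},
      ∀ Y ∈ Submodule.span ℂ {M | ∃ (i j : Fin n) (r : ℕ),
        ρ j i ∧ lam j - min (lam i) (lam j) ≤ r ∧ r < lam j ∧ M = E i j r},
      X * Y - Y * X ∈ Submodule.span ℂ {M | ∃ (i j : Fin n) (r : ℕ),
        ρ j i ∧ lam j - min (lam i) (lam j) ≤ r ∧ r < lam j ∧ M = E i j r} := by
    intro ρ hρ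
    apply hbr
    rintro x ⟨i, j, r, hij, h1, h2, rfl⟩ y ⟨k, l, s, hkl, h3, h4, rfl⟩
    have hx : E i j r * E k l s ∈ Submodule.span ℂ {M | ∃ (i j : Fin n) (r : ℕ),
        ρ j i ∧ lam j - min (lam i) (lam j) ≤ r ∧ r < lam j ∧ M = E i j r} := by
      by_cases hjk : j = k
      · subst hjk
        rw [hmul i j l r s (by omega)]
        by_cases hrs : lam l ≤ r + s
        · rw [hEzero _ _ _ hrs]; exact Submodule.zero_mem _
        · exact Submodule.subset_span ⟨i, l, r + s, hρ hkl hij, by omega, by omega, rfl⟩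
      · rw [hmul0 _ _ _ _ _ _ hjk]; exact Submodule.zero_mem _
    have hy : E k l s * E i j r ∈ Submodule.span ℂ {M | ∃ (i j : Fin n) (r : ℕ),
        ρ j i ∧ lam j - min (lam i) (lam j) ≤ r ∧ r < lam j ∧ M = E i j r} := by
      by_cases hli : l = i
      · subst hli
        rw [hmul k l j s r (by omega)]
        by_cases hrs : lam j ≤ s + r
        · rw [hEzero _ _ _ hrs]; exact Submodule.zero_mem _
        · exact Submodule.subset_span ⟨k, j, s + r, hρ hij hkl, by omega, by omega, rfl⟩
      · rw [hmul0 _ _ _ _ _ _ hli]; exact Submodule.zero_mem _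
    exact Submodule.sub_mem _ hx hy
  have hclosm : ∀ X ∈ nminus, ∀ Y ∈ nminus, X * Y - Y * X ∈ nminus := by
    rw [hnm]
    exact hclos (fun i j => i < j) (fun h1 h2 => h1.trans h2)
  have hclosp : ∀ X ∈ nplus, ∀ Y ∈ nplus, X * Y - Y * X ∈ nplus := by
    rw [hnp]
    exact hclos (fun i j => j < i) (fun h1 h2 => h2.trans h1)
  have hdcomm : ∀ X ∈ hdiag, ∀ Y ∈ hdiag, X * Y = Y * X := by
    rw [hhd]
    apply hcmh
    rintro x ⟨i, r, hr, rfl⟩ y ⟨j, s, hs, rfl⟩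
    by_cases hij : i = j
    · subst hij
      rw [hmul i i i r s (by omega), hmul i i i s r (by omega), Nat.add_comm]
    · rw [hmul0 _ _ _ _ _ _ hij, hmul0 _ _ _ _ _ _ (Ne.symm hij)]
  have hclosd : ∀ X ∈ hdiag, ∀ Y ∈ hdiag, X * Y - Y * X ∈ hdiag := by
    intro X hX Y hY
    rw [hdcomm X hX Y hY, sub_self]
    exact Submodule.zero_mem _
  -- main spanning
  have heapp2 : ∀ a b : Fin N, e a b =
      if row a = row b ∧ col b = col a + 1 then 1 else 0 := by
    intro a b
    rw [heapp]
    by_cases h : row a = row b ∧ col b = col a + 1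
    · rw [if_pos h, if_pos ((hsucc a b).2 h)]
    · rw [if_neg h, if_neg (fun hc => h ((hsucc a b).1 hc))]
  have hbpf : ∀ b : Fin N, col b - 1 < lam (row b) :=
    fun b => lt_of_le_of_lt (Nat.sub_le _ _) (hcol b)
  have hmain : Subalgebra.toSubmodule
      (Subalgebra.centralizer ℂ ({e} : Set (Matrix (Fin N) (Fin N) ℂ)))
      ≤ nminus ⊔ hdiag ⊔ nplus := by
    intro X hXmem
    rw [Subalgebra.mem_toSubmodule, Subalgebra.mem_centralizer_iff] at hXmem
    have hXe : e * X = X * e := hXmem e (Set.mem_singleton e)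
    have hR1 : ∀ a b : Fin N, (X * e) a b =
        if 0 < col b then X a (box (row b) (col b - 1) (hbpf b)) else 0 := by
      intro a b
      rw [Matrix.mul_apply]
      by_cases hb : 0 < col b
      · rw [if_pos hb, Finset.sum_eq_single (box (row b) (col b - 1) (hbpf b))]
        · rw [heapp2, if_pos ⟨boxrow _ _ _, by rw [boxcol]; omega⟩, mul_one]
        · intro c _ hc
          rw [heapp2]
          by_cases h : row c = row b ∧ col b = col c + 1
          · exact absurd (hinj c _ (by rw [h.1, boxrow]) (by rw [boxcol]; omega)) hc
          · rw [if_neg h, mul_zero]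
        · simp
      · rw [if_neg hb]
        apply Finset.sum_eq_zero
        intro c _
        rw [heapp2, if_neg, mul_zero]
        rintro ⟨-, h2⟩
        omega
    have hR2 : ∀ a b : Fin N, (e * X) a b =
        if h : col a + 1 < lam (row a) then X (box (row a) (col a + 1) h) b else 0 := by
      intro a b
      rw [Matrix.mul_apply]
      by_cases ha : col a + 1 < lam (row a)
      · rw [dif_pos ha, Finset.sum_eq_single (box (row a) (col a + 1) ha)]
        · rw [heapp2, if_pos ⟨(boxrow _ _ _).symm, boxcol _ _ _⟩, one_mul]
        · intro c _ hc
          rw [heapp2]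
          by_cases h : row a = row c ∧ col c = col a + 1
          · exact absurd (hinj c _ (by rw [← h.1, boxrow]) (by rw [boxcol, h.2])) hc
          · rw [if_neg h, zero_mul]
        · simp
      · rw [dif_neg ha]
        apply Finset.sum_eq_zero
        intro c _
        rw [heapp2, if_neg, zero_mul]
        rintro ⟨h1, h2⟩
        have := hcol c
        rw [← h1] at this
        omega
    have hR : ∀ a b : Fin N,
        (if 0 < col b then X a (box (row b) (col b - 1) (hbpf b)) else 0)
        = (if h : col a + 1 < lam (row a) then X (box (row a) (col a + 1) h) b else 0) := by
      intro a b
      rw [← hR1 a b, ← hR2 a b, hXe]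
    obtain ⟨yy, hyy, hyy0⟩ : ∃ yy : Fin n → Fin n → ℕ → ℕ → ℂ,
        (∀ (i j : Fin n) (p q : ℕ) (hp : p < lam i) (hq : q < lam j),
          yy i j p q = X (box i p hp) (box j q hq)) ∧
        (∀ (i j : Fin n) (p q : ℕ), ¬(p < lam i ∧ q < lam j) → yy i j p q = 0) := by
      refine ⟨fun i j p q =>
        if h : p < lam i ∧ q < lam j then X (box i p h.1) (box j q h.2) else 0, ?_, ?_⟩
      · intro i j p q hp hq
        exact dif_pos ⟨hp, hq⟩
      · intro i j p q h
        exact dif_neg h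
    have hM1 : ∀ (i j : Fin n) (p q : ℕ), p + 1 < lam i → q + 1 < lam j →
        yy i j (p + 1) (q + 1) = yy i j p q := by
      intro i j p q hp hq
      have hp' : p < lam i := by omega
      have hq' : q < lam j := by omega
      rw [hyy i j (p + 1) (q + 1) hp hq, hyy i j p q hp' hq']
      have hrel := hR (box i p hp') (box j (q + 1) hq)
      simp only [boxrow, boxcol] at hrel
      rw [if_pos (by omega : 0 < q + 1), dif_pos (by omega : p + 1 < lam i)] at hrel
      simp only [Nat.add_sub_cancel] at hrel
      exact hrel.symm
    have hM2 : ∀ (i j : Fin n) (p : ℕ), 0 < p → p < lam i → yy i j p 0 = 0 := by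
      intro i j p hp0 hp
      have hp' : p - 1 < lam i := by omega
      have h0j : 0 < lam j := hpos j
      rw [hyy i j p 0 hp h0j]
      have hrel := hR (box i (p - 1) hp') (box j 0 h0j)
      simp only [boxrow, boxcol] at hrel
      rw [if_neg (by omega : ¬ 0 < 0), dif_pos (by omega : p - 1 + 1 < lam i)] at hrel
      simp only [(by omega : p - 1 + 1 = p)] at hrel
      exact hrel.symm
    have hM3 : ∀ (i j : Fin n) (q : ℕ), q + 1 < lam j → yy i j (lam i - 1) q = 0 := by
      intro i j q hq
      have hpi := hpos i
      have hp' : lam i - 1 < lam i := by omega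
      have hq' : q < lam j := by omega
      rw [hyy i j (lam i - 1) q hp' hq']
      have hrel := hR (box i (lam i - 1) hp') (box j (q + 1) hq)
      simp only [boxrow, boxcol] at hrel
      rw [if_pos (by omega : 0 < q + 1), dif_neg (by omega : ¬ (lam i - 1 + 1 < lam i))]
        at hrel
      simp only [Nat.add_sub_cancel] at hrel
      exact hrel
    have hC1 : ∀ (i j : Fin n) (q p : ℕ), q < p → yy i j p q = 0 := by
      intro i j q
      induction q with
      | zero =>
        intro p hp
        by_cases h : p < lam i ∧ 0 < lam j
        · exact hM2 i j p hp h.1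
        · exact hyy0 i j p 0 h
      | succ q ih =>
        intro p hp
        by_cases h : p < lam i ∧ q + 1 < lam j
        · have hp1 : p - 1 + 1 = p := by omega
          have hstep := hM1 i j (p - 1) q (by omega) h.2
          rw [hp1] at hstep
          rw [hstep]
          exact ih (p - 1) (by omega)
        · exact hyy0 i j p (q + 1) h
    have hC2 : ∀ (i j : Fin n) (p q : ℕ), p ≤ q → p < lam i → q < lam j →
        yy i j p q = yy i j 0 (q - p) := by
      intro i j p
      induction p with
      | zero =>
        intro q _ _ _
        rw [Nat.sub_zero]
      | succ p ih =>
        intro q hpq hp hq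
        have hq1 : q - 1 + 1 = q := by omega
        have hstep := hM1 i j p (q - 1) hp (by omega)
        rw [hq1] at hstep
        rw [hstep, ih (q - 1) (by omega) (by omega) (by omega)]
        congr 1
        omega
    have hC3 : ∀ (i j : Fin n) (r : ℕ), lam i + r < lam j → yy i j 0 r = 0 := by
      intro i j r h
      have hpi := hpos i
      have hstep := hC2 i j (lam i - 1) (r + lam i - 1) (by omega) (by omega) (by omega)
      rw [hM3 i j (r + lam i - 1) (by omega)] at hstep
      have hr' : r + lam i - 1 - (lam i - 1) = r := by omega
      rw [hr'] at hstep
      exact hstep.symm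
    have hXab : ∀ a b : Fin N, X a b = yy (row a) (row b) (col a) (col b) := by
      intro a b
      rw [hyy (row a) (row b) (col a) (col b) (hcol a) (hcol b)]
      rw [show box (row a) (col a) (hcol a) = a from
        hinj _ _ (by rw [boxrow]) (by rw [boxcol]),
        show box (row b) (col b) (hcol b) = b from
        hinj _ _ (by rw [boxrow]) (by rw [boxcol])]
    have hdecomp : X = ∑ i : Fin n, ∑ j : Fin n,
        ∑ r ∈ Finset.range (lam j), yy i j 0 r • E i j r := by
      ext a b
      simp only [Matrix.sum_apply, Matrix.smul_apply, hEapp, smul_eq_mul]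
      rw [Finset.sum_eq_single (row a)]
      · rw [Finset.sum_eq_single (row b)]
        · by_cases hab : col a ≤ col b
          · rw [Finset.sum_eq_single (col b - col a)]
            · rw [if_pos ⟨rfl, rfl, by omega⟩, mul_one, hXab a b,
                hC2 (row a) (row b) (col a) (col b) hab (hcol a) (hcol b)]
            · intro r _ hr
              rw [if_neg, mul_zero]
              rintro ⟨-, -, h3⟩
              omega
            · intro hmem
              exact absurd (Finset.mem_range.2 (by have := hcol b; omega)) hmem
          · rw [hXab a b, hC1 (row a) (row b) (col b) (col a) (by omega)]
            apply (Finset.sum_eq_zero _).symm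
            intro r _
            rw [if_neg, mul_zero]
            rintro ⟨-, -, h3⟩
            omega
        · intro j _ hj
          apply Finset.sum_eq_zero
          intro r _
          rw [if_neg, mul_zero]
          rintro ⟨-, h2, -⟩
          exact hj h2.symm
        · simp
      · intro i _ hi
        apply Finset.sum_eq_zero
        intro j _
        apply Finset.sum_eq_zero
        intro r _
        rw [if_neg, mul_zero]
        rintro ⟨h1, -, -⟩
        exact hi h1.symm
      · simp
    rw [hdecomp]
    apply Submodule.sum_mem
    intro i _
    apply Submodule.sum_mem
    intro j _
    apply Submodule.sum_mem
    intro r hr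
    rw [Finset.mem_range] at hr
    by_cases hadm2 : lam j ≤ lam i + r
    · rcases lt_trichotomy i j with hij | hij | hij
      · apply Submodule.mem_sup_right
        apply Submodule.smul_mem
        rw [hnp]
        exact Submodule.subset_span ⟨i, j, r, hij, by omega, hr, rfl⟩
      · subst hij
        apply Submodule.mem_sup_left
        apply Submodule.mem_sup_right
        apply Submodule.smul_mem
        rw [hhd]
        exact Submodule.subset_span ⟨i, r, hr, rfl⟩
      · apply Submodule.mem_sup_left
        apply Submodule.mem_sup_left
        apply Submodule.smul_mem
        rw [hnm]
        exact Submodule.subset_span ⟨i, j, r, hij, by omega, hr, rfl⟩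
    · rw [hC3 i j r (by omega), zero_smul]
      exact Submodule.zero_mem _
  refine ⟨fun X Y hX hY => hclosm X hX Y hY, fun X Y hX hY => hclosd X hX Y hY, fun X Y hX hY => hclosp X hX Y hY, fun X Y hX hY => hdcomm X hX Y hY, hcent1, hcent2, hcent3, hint1, hint2, hint3, ?_⟩
  exact le_antisymm (sup_le (sup_le hcent1 hcent2) hcent3) hmain
end

section
/- Let R be a (possibly noncommutative) ring and A an n×n matrix over R such that A_{ij} = 0 whenever j > i + 1 and each superdiagonal entry A_{i,i+1} lies in the center of R. Then cdet A = Σ_{p=0}^{n−1} Σ_{0=i_0<i_1<⋯<i_p<i_{p+1}=n} A_{i_1, i_0+1}·A_{i_2, i_1+1}⋯A_{i_{p+1}, i_p+1} · Π_{j∈J} (−A_{j−1, j}), where J is the complement of the set {i_0+1, i_1+1, …, i_p+1} in {1,…,n}. -/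
open BigOperators

open Finset Equiv

section Helpers

variable {R : Type*} [Ring R]

/-- pull negations out of a list product -/
lemma prod_map_neg' (g : ℕ → R) : ∀ (l : List ℕ),
    ((l.map fun c => -g c).prod) = (-1 : R) ^ l.length * (l.map g).prod := by
  intro l
  induction l with
  | nil => simp
  | cons b l ih =>
      simp only [List.map_cons, List.prod_cons, ih, List.length_cons]
      have hcomm : Commute ((-1 : R) ^ l.length) (g b) :=
        ((Commute.neg_one_left (g b)).pow_left _)
      rw [pow_succ, mul_assoc, neg_one_mul]
      calc -g b * ((-1:R) ^ l.length * (List.map g l).prod)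
          = -(g b * ((-1:R) ^ l.length * (List.map g l).prod)) := by rw [neg_mul]
        _ = -((-1:R) ^ l.length * (g b * (List.map g l).prod)) := by
              rw [← mul_assoc, ← hcomm.eq, mul_assoc]
        _ = (-1:R) ^ l.length * -(g b * (List.map g l).prod) := (mul_neg _ _).symm

/-- sort of inserting a maximal new element appends it -/
lemma sort_insert_max {s : Finset ℕ} {x : ℕ} (hx : ∀ b ∈ s, b < x) :
    (insert x s).sort (· ≤ ·) = s.sort (· ≤ ·) ++ [x] := by
  have hxs : x ∉ s := fun h => lt_irrefl x (hx x h)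
  have p1 : (Finset.sort (insert x s) (· ≤ ·)).Perm ((insert x s).toList) :=
    Finset.sort_perm_toList (insert x s) (· ≤ ·)
  have p2 : ((insert x s).toList).Perm (x :: s.toList) := Finset.toList_insert hxs
  have p3 : (x :: s.toList).Perm (x :: s.sort (· ≤ ·)) :=
    List.Perm.cons x (Finset.sort_perm_toList s (· ≤ ·)).symm
  have p4 : (x :: s.sort (· ≤ ·)).Perm (s.sort (· ≤ ·) ++ [x]) :=
    (List.perm_append_singleton x (s.sort (· ≤ ·))).symm
  refine List.Perm.eq_of_pairwise' (Finset.pairwise_sort _ _) ?_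
    (p1.trans (p2.trans (p3.trans p4)))
  rw [List.pairwise_append]
  refine ⟨Finset.pairwise_sort _ _, List.pairwise_singleton _ x, ?_⟩
  intro b hb c hc
  rw [List.mem_singleton] at hc
  subst hc
  exact le_of_lt (hx b ((Finset.mem_sort _).1 hb))

/-- sort of a union of separated finsets -/
lemma sort_union_sep {s t : Finset ℕ} (h : ∀ b ∈ s, ∀ c ∈ t, b < c) :
    (s ∪ t).sort (· ≤ ·) = s.sort (· ≤ ·) ++ t.sort (· ≤ ·) := by
  classical
  induction t using Finset.induction_on_max with
  | empty => simp
  | insert x t hxt ih =>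
      have hst : ∀ b ∈ s, ∀ c ∈ t, b < c := fun b hb c hc => h b hb c (mem_insert_of_mem hc)
      have h1 : s ∪ insert x t = insert x (s ∪ t) := by
        ext y; simp only [Finset.mem_insert, Finset.mem_union]; tauto
      have hx : ∀ b ∈ s ∪ t, b < x := by
        intro b hb
        rcases Finset.mem_union.1 hb with hb | hb
        · exact h b hb x (mem_insert_self x t)
        · exact hxt b hb
      rw [h1, sort_insert_max hx, ih hst, sort_insert_max hxt, List.append_assoc]

lemma sort_Icc (a b : ℕ) : (Finset.Icc a b).sort (· ≤ ·) = List.range' a (b + 1 - a) := by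
  rcases le_or_gt a b with hab | hab
  · obtain ⟨d, rfl⟩ := Nat.exists_eq_add_of_le hab
    clear hab
    induction d generalizing a with
    | zero => simp [Finset.Icc_self]
    | succ d ih =>
        have h1 : Finset.Icc a (a + (d+1)) = insert a (Finset.Icc (a+1) (a + (d+1))) := by
          ext y; simp only [Finset.mem_Icc, Finset.mem_insert]; omega
        have h2 : a + (d + 1) = (a+1) + d := by omega
        have hle : ∀ c ∈ Finset.Icc (a+1) (a + (d+1)), a ≤ c := by
          intro c hc; have := (Finset.mem_Icc.1 hc).1; omega
        have hnm : a ∉ Finset.Icc (a+1) (a + (d+1)) := by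
          intro hc; have := (Finset.mem_Icc.1 hc).1; omega
        rw [h1, Finset.sort_insert (· ≤ ·) hle hnm]
        rw [h2, ih (a+1)]
        have e1 : (a+1) + d + 1 - (a+1) = d + 1 := by omega
        have e2 : (a+1) + d + 1 - a = (d + 1) + 1 := by omega
        rw [e1, e2, List.range'_succ, List.range'_succ, List.range'_succ]
  · rw [Finset.Icc_eq_empty (by omega)]
    have : b + 1 - a = 0 := by omega
    simp [this]

/-- zip-with-shift of a list with an appended element -/
lemma zip_shift_append : ∀ (L : List ℕ) (y x : ℕ),
    (y :: (L ++ [x])).zip (L ++ [x])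
      = ((y :: L).zip L) ++ [((y :: L).getLast (List.cons_ne_nil _ _), x)] := by
  intro L
  induction L with
  | nil => intro y x; simp
  | cons b L ih =>
      intro y x
      simp only [List.cons_append, List.zip_cons_cons]
      rw [ih b x]
      simp [List.getLast_cons]

end Helpers
open Finset Equiv

section Defs
variable {R : Type*} [Ring R] (a : ℕ → ℕ → R)

def linP (m : ℕ) (T : Finset ℕ) : R :=
  (((0 :: (T.sort (· ≤ ·) ++ [m])).zip (T.sort (· ≤ ·) ++ [m])).map
      (fun p => a p.2 (p.1 + 1))).prod

def jpP (m : ℕ) (T : Finset ℕ) : R :=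
  (((Finset.Icc 1 m \ ((insert 0 T).image (· + 1))).sort (· ≤ ·)).map
      (fun j => -(a (j - 1) j))).prod

def GG : ℕ → R
  | 0 => 1
  | (m+1) => ∑ T ∈ (Finset.Icc 1 m).powerset, linP a (m+1) T * jpP a (m+1) T

def trailP (k m : ℕ) : R :=
  ((List.range' (k+1) (m - (k+1))).map (fun c => -(a c (c+1)))).prod

end Defs

section L2
variable {R : Type*} [Ring R] (a : ℕ → ℕ → R)

lemma trail_shift (k L : ℕ) :
    ((List.range' (k+2) L).map (fun j => -(a (j-1) j))).prod
      = ((List.range' (k+1) L).map (fun c => -(a c (c+1)))).prod := by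
  have h : List.range' (k+2) L = (List.range' (k+1) L).map (1 + ·) := by
    rw [List.map_add_range']
    congr 1
    omega
  rw [h, List.map_map]
  congr 1
  apply List.map_congr_left
  intro c _
  show -(a (1 + c - 1) (1 + c)) = -(a c (c+1))
  have e1 : 1 + c - 1 = c := by omega
  have e2 : 1 + c = c + 1 := by omega
  rw [e1, e2]

lemma lin_insert (k m : ℕ) (T' : Finset ℕ) (hT' : ∀ b ∈ T', b < k) :
    linP a m (insert k T') = linP a k T' * a m (k+1) := by
  unfold linP
  rw [sort_insert_max hT']
  rw [zip_shift_append (T'.sort (· ≤ ·) ++ [k]) 0 m]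
  rw [List.map_append, List.prod_append]
  congr 1
  have hlast : (0 :: (T'.sort (· ≤ ·) ++ [k])).getLast (List.cons_ne_nil _ _) = k :=
    List.getLast_concat (l := 0 :: T'.sort (· ≤ ·))
  simp [hlast]

lemma lin_empty (m : ℕ) : linP a m (∅ : Finset ℕ) = a m 1 := by
  simp [linP]

lemma jp_insert (k m : ℕ) (hk : 1 ≤ k) (hkm : k ≤ m) (T' : Finset ℕ)
    (hT' : T' ⊆ Finset.Icc 1 (k-1)) :
    jpP a (m+1) (insert k T') = jpP a k T' * trailP a k (m+1) := by
  unfold jpP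
  have hS'le : ∀ y ∈ (insert 0 T').image (· + 1), y ≤ k := by
    intro y hy
    obtain ⟨t, ht, rfl⟩ := Finset.mem_image.1 hy
    rcases Finset.mem_insert.1 ht with rfl | ht
    · omega
    · have := (Finset.mem_Icc.1 (hT' ht)).2; omega
  have himg : (insert 0 (insert k T')).image (· + 1)
      = insert (k+1) ((insert 0 T').image (· + 1)) := by
    rw [Finset.insert_comm, Finset.image_insert]
  have hsplit : Finset.Icc 1 (m+1) \ ((insert 0 (insert k T')).image (· + 1))
      = (Finset.Icc 1 k \ ((insert 0 T').image (· + 1))) ∪ Finset.Icc (k+2) (m+1) := by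
    rw [himg]
    ext j
    simp only [Finset.mem_sdiff, Finset.mem_Icc, Finset.mem_union, Finset.mem_insert]
    constructor
    · rintro ⟨⟨h1, h2⟩, h3⟩
      push_neg at h3
      rcases le_or_gt j k with hj | hj
      · exact Or.inl ⟨⟨h1, hj⟩, h3.2⟩
      · right; constructor <;> omega
    · rintro (⟨⟨h1, h2⟩, h3⟩ | ⟨h1, h2⟩)
      · refine ⟨⟨h1, by omega⟩, ?_⟩
        push_neg
        exact ⟨by omega, h3⟩
      · refine ⟨⟨by omega, h2⟩, ?_⟩
        push_neg
        refine ⟨by omega, fun hj => ?_⟩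
        have := hS'le j hj; omega
  rw [hsplit, sort_union_sep, List.map_append, List.prod_append]
  · congr 1
    rw [sort_Icc]
    have hL : m + 1 + 1 - (k + 2) = m - k := by omega
    rw [hL, trail_shift]
    have hL2 : m + 1 - (k + 1) = m - k := by omega
    rw [trailP, hL2]
  · intro b hb c hc
    have hb' := (Finset.mem_Icc.1 (Finset.mem_sdiff.1 hb).1).2
    have hc' := (Finset.mem_Icc.1 hc).1
    omega

lemma jp_empty (m : ℕ) : jpP a (m+1) (∅ : Finset ℕ) = trailP a 0 (m+1) := by
  unfold jpP
  have h1 : (insert 0 (∅ : Finset ℕ)).image (· + 1) = {1} := by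
    simp
  have h2 : Finset.Icc 1 (m+1) \ {1} = Finset.Icc 2 (m+1) := by
    ext j
    simp only [Finset.mem_sdiff, Finset.mem_Icc, Finset.mem_singleton]
    omega
  rw [h1, h2, sort_Icc]
  have hL : m + 1 + 1 - 2 = m := by omega
  rw [hL, show (2 : ℕ) = 0 + 2 from rfl, trail_shift]
  rw [trailP]
  norm_num

lemma jp_comm (n : ℕ) (hc : ∀ j, 2 ≤ j → j ≤ n → ∀ x : R, a (j-1) j * x = x * a (j-1) j)
    (m : ℕ) (hm : m ≤ n) (T : Finset ℕ) (x : R) :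
    Commute (jpP a m T) x := by
  apply Commute.list_prod_left
  intro y hy
  obtain ⟨j, hj, rfl⟩ := List.mem_map.1 hy
  rw [Finset.mem_sort] at hj
  have hj1 := Finset.mem_sdiff.1 hj
  have hjm := Finset.mem_Icc.1 hj1.1
  have hj2 : 2 ≤ j := by
    rcases Nat.lt_or_ge j 2 with h | h
    · exfalso
      have : j = 1 := by omega
      subst this
      exact hj1.2 (Finset.mem_image.2 ⟨0, Finset.mem_insert_self _ _, rfl⟩)
    · exact h
  exact (Commute.neg_left (hc j hj2 (le_trans hjm.2 hm) x))

end L2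

section GRec
variable {R : Type*} [Ring R] (a : ℕ → ℕ → R)

lemma sup_mem_nat {T : Finset ℕ} (h : T.Nonempty) : T.sup id ∈ T := by
  obtain ⟨b, hb, he⟩ := Finset.exists_mem_eq_sup T h id
  rw [he]
  exact hb

lemma G_rec (n m : ℕ) (hm : m + 1 ≤ n)
    (hc : ∀ j, 2 ≤ j → j ≤ n → ∀ x : R, a (j-1) j * x = x * a (j-1) j) :
    GG a (m+1) = ∑ k ∈ Finset.range (m+1), GG a k * (a (m+1) (k+1) * trailP a k (m+1)) := by
  have hGk : ∀ k : ℕ, GG a k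
      = ∑ T' ∈ (Finset.Icc 1 (k-1)).powerset,
          (if k = 0 then 1 else linP a k T' * jpP a k T') := by
    intro k
    cases k with
    | zero => simp [GG]
    | succ k => simp [GG]
  have hR : ∀ k ∈ Finset.range (m+1),
      GG a k * (a (m+1) (k+1) * trailP a k (m+1))
        = ∑ T' ∈ (Finset.Icc 1 (k-1)).powerset,
            (if k = 0 then 1 else linP a k T' * jpP a k T')
              * (a (m+1) (k+1) * trailP a k (m+1)) := by
    intro k _
    rw [hGk, Finset.sum_mul]
  rw [Finset.sum_congr rfl hR, Finset.sum_sigma']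
  rw [show GG a (m+1)
      = ∑ T ∈ (Finset.Icc 1 m).powerset, linP a (m+1) T * jpP a (m+1) T from rfl]
  refine Finset.sum_nbij'
    (i := fun T => (⟨T.sup id, T.erase (T.sup id)⟩ : Σ _ : ℕ, Finset ℕ))
    (j := fun x => if x.1 = 0 then ∅ else insert x.1 x.2) ?_ ?_ ?_ ?_ ?_
  · -- i maps into sigma
    intro T hT
    have hsub := Finset.mem_powerset.1 hT
    rw [Finset.mem_sigma]
    constructor
    · show T.sup id ∈ Finset.range (m+1)
      rw [Finset.mem_range]
      have : T.sup id ≤ m := Finset.sup_le fun b hb => (Finset.mem_Icc.1 (hsub hb)).2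
      omega
    · show T.erase (T.sup id) ∈ (Finset.Icc 1 (T.sup id - 1)).powerset
      rw [Finset.mem_powerset]
      intro b hb
      have hbT := Finset.mem_of_mem_erase hb
      have hbne := Finset.ne_of_mem_erase hb
      have hble : b ≤ T.sup id := by simpa using Finset.le_sup (f := id) hbT
      have hb1 : 1 ≤ b := (Finset.mem_Icc.1 (hsub hbT)).1
      exact Finset.mem_Icc.2 ⟨hb1, by omega⟩
  · -- j maps into powerset
    rintro ⟨k, T'⟩ hx
    rw [Finset.mem_sigma] at hx
    have hk := Finset.mem_range.1 hx.1
    have hT' := Finset.mem_powerset.1 hx.2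
    dsimp only at hk hT' ⊢
    by_cases h0 : k = 0
    · simp [h0]
    · rw [if_neg h0, Finset.mem_powerset]
      intro b hb
      rcases Finset.mem_insert.1 hb with rfl | hb
      · exact Finset.mem_Icc.2 ⟨by omega, by omega⟩
      · have := Finset.mem_Icc.1 (hT' hb)
        exact Finset.mem_Icc.2 ⟨this.1, by omega⟩
  · -- left inverse
    intro T hT
    have hsub := Finset.mem_powerset.1 hT
    rcases Finset.eq_empty_or_nonempty T with rfl | hne
    · simp
    · have hmem : T.sup id ∈ T := sup_mem_nat hne
      have h1 : 1 ≤ T.sup id := (Finset.mem_Icc.1 (hsub hmem)).1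
      simp only [if_neg (by omega : ¬ T.sup id = 0)]
      exact Finset.insert_erase hmem
  · -- right inverse
    rintro ⟨k, T'⟩ hx
    rw [Finset.mem_sigma] at hx
    have hT' := Finset.mem_powerset.1 hx.2
    dsimp only at hT' ⊢
    by_cases h0 : k = 0
    · subst h0
      have : T' = ∅ := by
        rw [← Finset.subset_empty]
        intro b hb
        have := Finset.mem_Icc.1 (hT' hb); omega
      subst this
      simp
    · rw [if_neg h0]
      have hkT' : k ∉ T' := by
        intro h
        have := Finset.mem_Icc.1 (hT' h); omega
      have hsup : (insert k T').sup id = k := by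
        rw [Finset.sup_insert]
        have hle : T'.sup id ≤ k := Finset.sup_le fun b hb => by
          have := Finset.mem_Icc.1 (hT' hb)
          show b ≤ k
          omega
        exact sup_eq_left.2 hle
      rw [hsup, Finset.erase_insert hkT']
  · -- term equality
    intro T hT
    have hsub := Finset.mem_powerset.1 hT
    rcases Finset.eq_empty_or_nonempty T with rfl | hne
    · rw [lin_empty, jp_empty]
      simp
    · have hmem : T.sup id ∈ T := sup_mem_nat hne
      set k := T.sup id with hk
      have h1 : 1 ≤ k := (Finset.mem_Icc.1 (hsub hmem)).1
      have hkm : k ≤ m := (Finset.mem_Icc.1 (hsub hmem)).2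
      have hT'lt : ∀ b ∈ T.erase k, b < k := by
        intro b hb
        have : b ≤ T.sup id := by simpa using Finset.le_sup (f := id) (Finset.mem_of_mem_erase hb)
        have := Finset.ne_of_mem_erase hb
        omega
      have hT'sub : T.erase k ⊆ Finset.Icc 1 (k-1) := by
        intro b hb
        have h1b := (Finset.mem_Icc.1 (hsub (Finset.mem_of_mem_erase hb))).1
        have := hT'lt b hb
        exact Finset.mem_Icc.2 ⟨h1b, by omega⟩
      have hTeq : T = insert k (T.erase k) := (Finset.insert_erase hmem).symm
      show linP a (m+1) T * jpP a (m+1) T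
          = (if k = 0 then 1 else linP a k (T.erase k) * jpP a k (T.erase k))
              * (a (m+1) (k+1) * trailP a k (m+1))
      rw [if_neg (by omega : ¬ k = 0)]
      conv_lhs => rw [hTeq]
      rw [lin_insert a k (m+1) (T.erase k) hT'lt,
        jp_insert a k m h1 hkm (T.erase k) hT'sub]
      have hcomm : jpP a k (T.erase k) * a (m+1) (k+1)
          = a (m+1) (k+1) * jpP a k (T.erase k) :=
        (jp_comm a n hc k (by omega) (T.erase k) (a (m+1) (k+1))).eq
      rw [mul_assoc, mul_assoc]
      congr 1
      rw [← mul_assoc, ← hcomm, mul_assoc]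

end GRec

section CdetDefs
variable {R : Type*} [Ring R] (a : ℕ → ℕ → R)

def cdetP (m : ℕ) : R :=
  ∑ σ : Equiv.Perm (Fin m),
    (Equiv.Perm.sign σ : ℤ) • (List.ofFn fun j : Fin m => a ((σ j : ℕ) + 1) ((j : ℕ) + 1)).prod

variable {m : ℕ}

def cycP (k : Fin (m+1)) : Equiv.Perm (Fin (m+1)) :=
  Fin.revPerm * (Fin.cycleRange k.rev) * Fin.revPerm

lemma cycP_apply (k c : Fin (m+1)) : cycP k c = (Fin.cycleRange k.rev c.rev).rev := rfl

lemma cycP_lt {k c : Fin (m+1)} (h : (c : ℕ) < (k : ℕ)) : cycP k c = c := by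
  rw [cycP_apply, Fin.cycleRange_of_gt, Fin.rev_rev]
  rw [Fin.lt_def, Fin.val_rev, Fin.val_rev]
  omega

lemma cycP_eq (k : Fin (m+1)) : cycP k k = Fin.last m := by
  rw [cycP_apply, Fin.cycleRange_self, Fin.rev_zero]

lemma cycP_gt {k c : Fin (m+1)} (h : (k : ℕ) < (c : ℕ)) :
    ((cycP k c : Fin (m+1)) : ℕ) = (c : ℕ) - 1 := by
  have hlt : c.rev < k.rev := by
    rw [Fin.lt_def, Fin.val_rev, Fin.val_rev]
    have := c.2
    omega
  rw [cycP_apply, Fin.val_rev, Fin.coe_cycleRange_of_lt hlt, Fin.val_rev]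
  have := c.2
  omega

lemma sign_cycP (k : Fin (m+1)) :
    Equiv.Perm.sign (cycP k) = (-1 : ℤˣ) ^ (m - (k : ℕ)) := by
  rw [cycP, map_mul, map_mul]
  have huv : ∀ u v : ℤˣ, u * v * u = v := fun u v => by
    rw [mul_comm u v, mul_assoc, ← sq, Int.units_sq, mul_one]
  rw [huv, Fin.sign_cycleRange]
  congr 1
  rw [Fin.val_rev]
  omega

def upEquiv (k : Fin (m+1)) : Fin (k : ℕ) ≃ {x : Fin (m+1) // (x : ℕ) < (k : ℕ)} where
  toFun i := ⟨⟨(i : ℕ), lt_trans i.2 k.2⟩, i.2⟩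
  invFun x := ⟨(x.1 : ℕ), x.2⟩
  left_inv i := by ext; rfl
  right_inv x := by ext; rfl

def extP (k : Fin (m+1)) (τ : Equiv.Perm (Fin (k : ℕ))) : Equiv.Perm (Fin (m+1)) :=
  τ.extendDomain (upEquiv k)

def embP (k : Fin (m+1)) (τ : Equiv.Perm (Fin (k : ℕ))) : Equiv.Perm (Fin (m+1)) :=
  cycP k * extP k τ

lemma extP_lt {k : Fin (m+1)} (τ : Equiv.Perm (Fin (k : ℕ))) {c : Fin (m+1)}
    (h : (c : ℕ) < (k : ℕ)) : extP k τ c = ⟨(τ ⟨(c : ℕ), h⟩ : ℕ), lt_trans (τ _).2 k.2⟩ := by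
  rw [extP, Equiv.Perm.extendDomain_apply_subtype τ (upEquiv k) h]
  rfl

lemma extP_not_lt {k : Fin (m+1)} (τ : Equiv.Perm (Fin (k : ℕ))) {c : Fin (m+1)}
    (h : ¬ (c : ℕ) < (k : ℕ)) : extP k τ c = c :=
  Equiv.Perm.extendDomain_apply_not_subtype τ (upEquiv k) h

lemma embP_lt {k : Fin (m+1)} (τ : Equiv.Perm (Fin (k : ℕ))) {c : Fin (m+1)}
    (h : (c : ℕ) < (k : ℕ)) :
    ((embP k τ c : Fin (m+1)) : ℕ) = (τ ⟨(c : ℕ), h⟩ : ℕ) := by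
  have h2 : embP k τ c = cycP k ⟨(τ ⟨(c : ℕ), h⟩ : ℕ), lt_trans (τ _).2 k.2⟩ := by
    rw [embP, Equiv.Perm.mul_apply, extP_lt τ h]
  rw [h2, cycP_lt (τ _).2]

lemma embP_eq {k : Fin (m+1)} (τ : Equiv.Perm (Fin (k : ℕ))) :
    embP k τ k = Fin.last m := by
  rw [embP, Equiv.Perm.mul_apply, extP_not_lt τ (lt_irrefl _), cycP_eq]

lemma embP_gt {k : Fin (m+1)} (τ : Equiv.Perm (Fin (k : ℕ))) {c : Fin (m+1)}
    (h : (k : ℕ) < (c : ℕ)) :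
    ((embP k τ c : Fin (m+1)) : ℕ) = (c : ℕ) - 1 := by
  rw [embP, Equiv.Perm.mul_apply, extP_not_lt τ (by omega), cycP_gt h]

lemma sign_embP {k : Fin (m+1)} (τ : Equiv.Perm (Fin (k : ℕ))) :
    Equiv.Perm.sign (embP k τ) = (-1 : ℤˣ) ^ (m - (k : ℕ)) * Equiv.Perm.sign τ := by
  rw [embP, map_mul, sign_cycP, extP, Equiv.Perm.sign_extendDomain]

end CdetDefs

section EmbTerm
variable {R : Type*} [Ring R] (a : ℕ → ℕ → R)

omit [Ring R] in
lemma ofFn_eq_range_map {S : Type*} {M : ℕ} (G : ℕ → S) (F : Fin M → S)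
    (h : ∀ j : Fin M, F j = G (j : ℕ)) :
    List.ofFn F = (List.range M).map G := by
  refine List.ext_getElem (by simp) fun i h1 h2 => ?_
  simp [h]

variable {m : ℕ}

lemma emb_term (k : Fin (m+1)) (τ : Equiv.Perm (Fin (k : ℕ))) :
    (Equiv.Perm.sign (embP k τ) : ℤ) •
        (List.ofFn fun j : Fin (m+1) => a ((embP k τ j : ℕ) + 1) ((j : ℕ) + 1)).prod
      = ((Equiv.Perm.sign τ : ℤ) •
            (List.ofFn fun j : Fin (k : ℕ) => a ((τ j : ℕ) + 1) ((j : ℕ) + 1)).prod)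
          * (a (m+1) ((k : ℕ)+1) * trailP a (k : ℕ) (m+1)) := by
  have hK : (k : ℕ) ≤ m := by omega
  set G : ℕ → R := fun c =>
    if h : c < (k : ℕ) then a ((τ ⟨c, h⟩ : ℕ) + 1) (c + 1)
    else if c = (k : ℕ) then a (m+1) (c+1) else a c (c+1) with hG
  have hlist : (List.ofFn fun j : Fin (m+1) => a ((embP k τ j : ℕ) + 1) ((j : ℕ) + 1))
      = (List.range (m+1)).map G := by
    apply ofFn_eq_range_map
    intro j
    rcases lt_trichotomy (j : ℕ) (k : ℕ) with hj | hj | hj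
    · rw [hG]
      simp only [dif_pos hj]
      rw [embP_lt τ hj]
    · rw [hG]
      simp only [dif_neg (by omega : ¬ (j:ℕ) < (k:ℕ)), if_pos hj]
      rw [show j = k from Fin.ext hj, embP_eq τ]
      simp
    · rw [hG]
      simp only [dif_neg (by omega : ¬ (j:ℕ) < (k:ℕ)), if_neg (by omega : ¬ (j:ℕ) = (k:ℕ))]
      rw [embP_gt τ hj]
      congr 2
      omega
  have e1 : List.range' 0 (k:ℕ) ++ List.range' (k:ℕ) 1 = List.range' 0 ((k:ℕ)+1) := by
    have := List.range'_append_1 (s := 0) (m := (k:ℕ)) (n := 1)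
    simpa [Nat.add_comm] using this
  have e2 : List.range' 0 ((k:ℕ)+1) ++ List.range' ((k:ℕ)+1) (m-(k:ℕ))
      = List.range' 0 ((k:ℕ)+1+(m-(k:ℕ))) := by
    have := List.range'_append_1 (s := 0) (m := (k:ℕ)+1) (n := m-(k:ℕ))
    simpa [Nat.add_comm] using this
  have e3 : (k:ℕ)+1+(m-(k:ℕ)) = m+1 := by omega
  have hsplit : List.range (m+1)
      = (List.range' 0 (k:ℕ) ++ List.range' (k:ℕ) 1) ++ List.range' ((k:ℕ)+1) (m-(k:ℕ)) := by
    rw [List.range_eq_range', e1, e2, e3]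
  have hseg1 : (List.ofFn fun j : Fin (k:ℕ) => a ((τ j : ℕ) + 1) ((j : ℕ) + 1))
      = (List.range' 0 (k:ℕ)).map G := by
    rw [← List.range_eq_range']
    apply ofFn_eq_range_map
    intro j
    rw [hG]
    simp only [dif_pos j.isLt, Fin.eta]
  have hseg2 : (List.range' (k:ℕ) 1).map G = [a (m+1) ((k:ℕ)+1)] := by
    rw [List.range'_one]
    simp [hG]
  have hseg3 : (List.range' ((k:ℕ)+1) (m-(k:ℕ))).map G
      = (List.range' ((k:ℕ)+1) (m-(k:ℕ))).map (fun c => a c (c+1)) := by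
    apply List.map_congr_left
    intro c hc
    have hcK : (k:ℕ) + 1 ≤ c := (List.mem_range'_1.1 hc).1
    rw [hG]
    simp only [dif_neg (by omega : ¬ c < (k:ℕ)), if_neg (by omega : ¬ c = (k:ℕ))]
  have htrail : trailP a (k:ℕ) (m+1)
      = (-1:R)^(m-(k:ℕ))
          * ((List.range' ((k:ℕ)+1) (m-(k:ℕ))).map (fun c => a c (c+1))).prod := by
    rw [trailP, Nat.succ_sub_succ_eq_sub, prod_map_neg']
    congr 2
    simp
  have hsign : ((Equiv.Perm.sign (embP k τ) : ℤ) : R)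
      = (-1:R)^(m-(k:ℕ)) * ((Equiv.Perm.sign τ : ℤ) : R) := by
    rw [sign_embP τ]
    push_cast
    try rfl
  rw [hlist, hsplit, List.map_append, List.map_append, List.prod_append, List.prod_append,
    hseg2, hseg3, ← hseg1, htrail]
  rw [zsmul_eq_mul, zsmul_eq_mul, hsign]
  have hsing : List.prod [a (m+1) ((k:ℕ)+1)] = a (m+1) ((k:ℕ)+1) := by simp
  rw [hsing]
  set P1 := (List.ofFn fun j : Fin (k:ℕ) => a ((τ j : ℕ) + 1) ((j : ℕ) + 1)).prod with hP1
  set P3 := ((List.range' ((k:ℕ)+1) (m-(k:ℕ))).map (fun c => a c (c+1))).prod with hP3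
  set A := a (m+1) ((k:ℕ)+1) with hA
  set e := m - (k:ℕ) with he
  set z : R := ((Equiv.Perm.sign τ : ℤ) : R) with hz
  have h1 : ∀ y : R, (-1:R)^e * y = y * (-1:R)^e :=
    fun y => ((Commute.neg_one_left y).pow_left e).eq
  calc ((-1:R)^e * z) * (P1 * A * P3)
      = (-1:R)^e * (z * (P1 * A * P3)) := by rw [mul_assoc]
    _ = (-1:R)^e * (z * P1 * A * P3) := by rw [mul_assoc, mul_assoc, mul_assoc]
    _ = (z * P1 * A * P3) * (-1:R)^e := h1 _
    _ = z * P1 * (A * (P3 * (-1:R)^e)) := by rw [mul_assoc, mul_assoc]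
    _ = z * P1 * (A * ((-1:R)^e * P3)) := by rw [← h1 P3]
end EmbTerm

section EmbBij
variable {R : Type*} [Ring R] (a : ℕ → ℕ → R) {m : ℕ}

lemma emb_inj (k k' : Fin (m+1)) (τ : Equiv.Perm (Fin (k:ℕ))) (τ' : Equiv.Perm (Fin (k':ℕ)))
    (h : embP k τ = embP k' τ') :
    (⟨k, τ⟩ : Σ k : Fin (m+1), Equiv.Perm (Fin (k:ℕ))) = ⟨k', τ'⟩ := by
  have hkk : k = k' := by
    rcases lt_trichotomy (k:ℕ) (k':ℕ) with hlt | heq | hgt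
    · exfalso
      have h1 := congrArg (fun σ : Equiv.Perm (Fin (m+1)) => ((σ k' : Fin (m+1)) : ℕ)) h
      rw [embP_gt τ hlt, embP_eq τ'] at h1
      have := k'.2
      simp [Fin.val_last] at h1
      omega
    · exact Fin.ext heq
    · exfalso
      have h1 := congrArg (fun σ : Equiv.Perm (Fin (m+1)) => ((σ k : Fin (m+1)) : ℕ)) h
      rw [embP_eq τ, embP_gt τ' hgt] at h1
      have := k.2
      simp [Fin.val_last] at h1
      omega
  subst hkk
  have hττ : τ = τ' := by
    apply Equiv.ext
    intro i
    apply Fin.ext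
    have hc : ((⟨(i:ℕ), lt_trans i.2 k.2⟩ : Fin (m+1)) : ℕ) < (k:ℕ) := i.2
    have h1 := congrArg
      (fun σ : Equiv.Perm (Fin (m+1)) => ((σ ⟨(i:ℕ), lt_trans i.2 k.2⟩ : Fin (m+1)) : ℕ)) h
    rw [embP_lt τ hc, embP_lt τ' hc] at h1
    simpa [Fin.eta] using h1
  rw [hττ]

lemma emb_surj (n : ℕ) (hm : m + 1 ≤ n)
    (hz : ∀ i j, 1 ≤ i → i ≤ n → 1 ≤ j → j ≤ n → i + 1 < j → a i j = 0)
    (σ : Equiv.Perm (Fin (m+1)))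
    (hne : (Equiv.Perm.sign σ : ℤ) •
        (List.ofFn fun j : Fin (m+1) => a ((σ j : ℕ)+1) ((j:ℕ)+1)).prod ≠ 0) :
    ∃ (k : Fin (m+1)) (τ : Equiv.Perm (Fin (k:ℕ))), embP k τ = σ := by
  have hfac : ∀ j : Fin (m+1), a ((σ j : ℕ)+1) ((j:ℕ)+1) ≠ 0 := by
    intro j h0
    apply hne
    have hmem : (0:R) ∈ (List.ofFn fun j : Fin (m+1) => a ((σ j : ℕ)+1) ((j:ℕ)+1)) := by
      rw [List.mem_ofFn]
      exact ⟨j, h0⟩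
    rw [List.prod_eq_zero hmem, smul_zero]
  have hlb : ∀ j : Fin (m+1), (j:ℕ) ≤ (σ j : ℕ) + 1 := by
    intro j
    by_contra h
    push_neg at h
    have h2 := (σ j).2
    have h3 := j.2
    exact hfac j (hz _ _ (by omega) (by omega) (by omega) (by omega) (by omega))
  set k := σ⁻¹ (Fin.last m) with hk
  have hσk : σ k = Fin.last m := Equiv.apply_symm_apply σ _
  have hnem : ∀ c : Fin (m+1), c ≠ k → (σ c : ℕ) ≠ m := by
    intro c hck h
    apply hck
    apply σ.injective
    rw [hσk]
    exact Fin.ext (by simpa using h)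
  have hgt : ∀ c : Fin (m+1), (k:ℕ) < (c:ℕ) → (σ c : ℕ) = (c:ℕ) - 1 := by
    have main : ∀ d, ∀ c : Fin (m+1), (k:ℕ) < (c:ℕ) → m - (c:ℕ) ≤ d →
        (σ c : ℕ) = (c:ℕ) - 1 := by
      intro d
      induction d with
      | zero =>
          intro c hkc hc
          have hcm : (c:ℕ) = m := by have := c.2; omega
          have h1 : (σ c : ℕ) ≠ m := hnem c (fun e => by rw [e] at hkc; omega)
          have h2 := hlb c
          have h3 := (σ c).2
          omega
      | succ d ih =>
          intro c hkc hc
          rcases Nat.lt_or_ge ((σ c : Fin (m+1)) : ℕ) (c:ℕ) with hlt | hge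
          · have := hlb c; omega
          · exfalso
            have h1 : (σ c : ℕ) ≠ m := hnem c (fun e => by rw [e] at hkc; omega)
            have h2 : (σ c : ℕ) + 1 ≤ m := by have := (σ c).2; omega
            set c' : Fin (m+1) := ⟨(σ c : ℕ)+1, by omega⟩ with hc'
            have h3 : (σ c' : ℕ) = (c':ℕ) - 1 :=
              ih c' (by simp [hc']; omega) (by simp [hc']; omega)
            have h4 : σ c' = σ c := by
              apply Fin.ext
              rw [h3]
              simp [hc']
            have h5 : c' = c := σ.injective h4
            have h6 := congrArg (fun x : Fin (m+1) => (x:ℕ)) h5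
            simp [hc'] at h6
            omega
    intro c h
    exact main m c h (by omega)
  have hltk : ∀ c : Fin (m+1), (c:ℕ) < (k:ℕ) → (σ c : ℕ) < (k:ℕ) := by
    intro c hck
    by_contra h
    push_neg at h
    have h1 : (σ c : ℕ) ≠ m := hnem c (fun e => by rw [e] at hck; omega)
    have h2 : (σ c : ℕ) + 1 ≤ m := by have := (σ c).2; omega
    set c' : Fin (m+1) := ⟨(σ c : ℕ)+1, by omega⟩ with hc'
    have h3 : (σ c' : ℕ) = (c':ℕ) - 1 := hgt c' (by simp [hc']; omega)
    have h4 : σ c' = σ c := by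
      apply Fin.ext
      rw [h3]
      simp [hc']
    have h5 : c' = c := σ.injective h4
    have h6 := congrArg (fun x : Fin (m+1) => (x:ℕ)) h5
    simp [hc'] at h6
    have hkm := k.2
    omega
  have hp : ∀ x : Fin (m+1), ((x:ℕ) < (k:ℕ)) ↔ ((σ x : ℕ) < (k:ℕ)) := by
    intro x
    constructor
    · exact hltk x
    · intro hx
      by_contra hcx
      push_neg at hcx
      rcases Nat.eq_or_lt_of_le hcx with he | hlt
      · have : x = k := Fin.ext he.symm
        rw [this, hσk] at hx
        simp [Fin.val_last] at hx
        have := k.2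
        omega
      · rw [hgt x hlt] at hx
        omega
  set τ0 : Equiv.Perm {x : Fin (m+1) // (x:ℕ) < (k:ℕ)} := σ.subtypePerm (fun x => (hp x).symm) with hτ0
  refine ⟨k, Equiv.permCongr (upEquiv k).symm τ0, ?_⟩
  apply Equiv.ext
  intro c
  apply Fin.ext
  rcases lt_trichotomy (c:ℕ) (k:ℕ) with hc | hc | hc
  · rw [embP_lt _ hc]
    simp only [Equiv.permCongr_apply, Equiv.symm_symm, hτ0]
    show ((upEquiv k).symm (σ.subtypePerm (fun x => (hp x).symm) (upEquiv k ⟨(c:ℕ), hc⟩)) : ℕ) = (σ c : ℕ)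
    simp [upEquiv, Equiv.Perm.subtypePerm_apply]
  · have : c = k := Fin.ext hc
    subst this
    rw [embP_eq, hσk]
  · rw [embP_gt _ hc, hgt c hc]

end EmbBij

section MainRec
variable {R : Type*} [Ring R] (a : ℕ → ℕ → R)

lemma cdet_rec (n : ℕ) {m : ℕ} (hm : m + 1 ≤ n)
    (hz : ∀ i j, 1 ≤ i → i ≤ n → 1 ≤ j → j ≤ n → i + 1 < j → a i j = 0) :
    cdetP a (m+1)
      = ∑ k ∈ Finset.range (m+1), cdetP a k * (a (m+1) (k+1) * trailP a k (m+1)) := by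
  rw [← Fin.sum_univ_eq_sum_range
    (fun k => cdetP a k * (a (m+1) (k+1) * trailP a k (m+1))) (m+1)]
  have hterm : ∀ k : Fin (m+1), cdetP a (k:ℕ) * (a (m+1) ((k:ℕ)+1) * trailP a (k:ℕ) (m+1))
      = ∑ τ : Equiv.Perm (Fin (k:ℕ)),
          ((Equiv.Perm.sign τ : ℤ) •
              (List.ofFn fun j : Fin (k:ℕ) => a ((τ j : ℕ)+1) ((j:ℕ)+1)).prod)
            * (a (m+1) ((k:ℕ)+1) * trailP a (k:ℕ) (m+1)) := by
    intro k
    rw [cdetP, Finset.sum_mul]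
  rw [Finset.sum_congr rfl (fun k _ => hterm k), Finset.sum_sigma', cdetP]
  refine (Finset.sum_bij_ne_zero (fun x _ _ => embP x.1 x.2)
    (fun _ _ _ => Finset.mem_univ _) ?_ ?_ ?_).symm
  · rintro ⟨k₁, τ₁⟩ h₁₁ h₁₂ ⟨k₂, τ₂⟩ h₂₁ h₂₂ heq
    exact emb_inj k₁ k₂ τ₁ τ₂ heq
  · intro σ _ hσ
    obtain ⟨k, τ, he⟩ := emb_surj a n hm hz σ hσ
    refine ⟨⟨k, τ⟩, Finset.mem_sigma.2 ⟨Finset.mem_univ _, Finset.mem_univ _⟩, ?_, he⟩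
    show ((Equiv.Perm.sign τ : ℤ) •
        (List.ofFn fun j : Fin (k:ℕ) => a ((τ j : ℕ)+1) ((j:ℕ)+1)).prod)
          * (a (m+1) ((k:ℕ)+1) * trailP a (k:ℕ) (m+1)) ≠ 0
    rw [← emb_term a k τ, he]
    exact hσ
  · rintro ⟨k, τ⟩ _ _
    exact (emb_term a k τ).symm

lemma cdet_eq_G (n : ℕ)
    (hz : ∀ i j, 1 ≤ i → i ≤ n → 1 ≤ j → j ≤ n → i + 1 < j → a i j = 0)
    (hc : ∀ j, 2 ≤ j → j ≤ n → ∀ x : R, a (j-1) j * x = x * a (j-1) j) :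
    ∀ m, m ≤ n → cdetP a m = GG a m := by
  intro m
  induction m using Nat.strong_induction_on with
  | _ m ih =>
    intro hmn
    cases m with
    | zero =>
        rw [GG, cdetP]
        simp
    | succ m =>
        rw [cdet_rec a n hmn hz, G_rec a n m hmn hc]
        apply Finset.sum_congr rfl
        intro k hk
        rw [ih k (by rw [Finset.mem_range] at hk; omega) (by rw [Finset.mem_range] at hk; omega)]

end MainRec

/-- for an `n×n` matrix `A` over a (possibly noncommutative) ring with
`A_{ij} = 0` for `j > i+1` and central superdiagonal entries `A_{i,i+1}`, the
column-determinant `cdet A = Σ_σ sgn(σ)·A_{σ(1)1}⋯A_{σ(n)n}` expands as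
`Σ_{p=0}^{n−1} Σ_{0=i_0<i_1<⋯<i_p<i_{p+1}=n} A_{i_1,i_0+1}⋯A_{i_{p+1},i_p+1}
 · Π_{j∈J}(−A_{j−1,j})`, `J` being the complement of `{i_0+1,…,i_p+1}` in `{1,…,n}`.
Here `a i j` denotes the entry of `A` in row `i`, column `j` with 1-based indexing,
and an increasing chain `0 = i_0 < ⋯ < i_p < i_{p+1} = n` corresponds to the subset
`T = {i_1,…,i_p} ⊆ {1,…,n−1}`. -/
theorem cdet_hessenberg_expansion
    {R : Type*} [Ring R] (n : ℕ) (hn : 0 < n)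
    (A : Matrix (Fin n) (Fin n) R)
    (hA : ∀ i j : Fin n, (i : ℕ) + 1 < (j : ℕ) → A i j = 0)
    (hcentral : ∀ i j : Fin n, (j : ℕ) = (i : ℕ) + 1 → ∀ x : R, A i j * x = x * A i j)
    (a : ℕ → ℕ → R)
    (ha : ∀ i j : Fin n, a ((i : ℕ) + 1) ((j : ℕ) + 1) = A i j) :
    (∑ σ : Equiv.Perm (Fin n),
        (Equiv.Perm.sign σ : ℤ) • (List.ofFn fun j : Fin n => A (σ j) j).prod)
      = ∑ T ∈ (Finset.Icc 1 (n - 1)).powerset,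
          (((0 :: (T.sort (· ≤ ·) ++ [n])).zip (T.sort (· ≤ ·) ++ [n])).map
              (fun p => a p.2 (p.1 + 1))).prod
            * (((Finset.Icc 1 n \ ((insert 0 T).image (· + 1))).sort (· ≤ ·)).map
                (fun j => -(a (j - 1) j))).prod := by
  have hz : ∀ i j, 1 ≤ i → i ≤ n → 1 ≤ j → j ≤ n → i + 1 < j → a i j = 0 := by
    intro i j hi1 hin hj1 hjn hij
    have hA' := hA ⟨i-1, by omega⟩ ⟨j-1, by omega⟩ (by simp only; omega)
    have he := ha ⟨i-1, by omega⟩ ⟨j-1, by omega⟩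
    simp only at he hA'
    have e1 : i - 1 + 1 = i := by omega
    have e2 : j - 1 + 1 = j := by omega
    rw [e1, e2] at he
    rw [he, hA']
  have hc : ∀ j, 2 ≤ j → j ≤ n → ∀ x : R, a (j-1) j * x = x * a (j-1) j := by
    intro j h2 hjn x
    have he := ha ⟨j-2, by omega⟩ ⟨j-1, by omega⟩
    simp only at he
    have e1 : j - 2 + 1 = j - 1 := by omega
    have e2 : j - 1 + 1 = j := by omega
    rw [e1, e2] at he
    rw [he]
    exact hcentral _ _ (by simp only; omega) x
  have hL : (∑ σ : Equiv.Perm (Fin n),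
      (Equiv.Perm.sign σ : ℤ) • (List.ofFn fun j : Fin n => A (σ j) j).prod) = cdetP a n := by
    rw [cdetP]
    apply Finset.sum_congr rfl
    intro σ _
    congr 2
    exact congrArg List.ofFn (funext fun j => (ha (σ j) j).symm)
  rw [hL]
  obtain ⟨n', rfl⟩ : ∃ n', n = n' + 1 := ⟨n - 1, by omega⟩
  rw [cdet_eq_G a (n'+1) hz hc (n'+1) le_rfl]
  rfl
end

section
/- Let R be a (possibly noncommutative) ring and A an n×n matrix over R such that A_{ij} = 0 whenever j > i + 1 and each superdiagonal entry A_{i,i+1} lies in the center of R. Then the column-determinant of A equals its row-determinant: cdet A = rdet A. -/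
open BigOperators

theorem Equiv.Perm.apply_inv_self {α : Type*} (f : Equiv.Perm α) (x : α) : f (f⁻¹ x) = x :=
  Equiv.Perm.eq_inv_iff_eq.mp rfl

theorem Equiv.Perm.inv_apply_self {α : Type*} (f : Equiv.Perm α) (x : α) : f⁻¹ (f x) = x :=
  Equiv.Perm.inv_eq_iff_eq.mpr rfl

theorem List.eq_of_perm_of_sorted {α : Type*} {r : α → α → Prop} [Std.Antisymm r]
    {l₁ l₂ : List α} (hp : l₁.Perm l₂) (h1 : l₁.Pairwise r) (h2 : l₂.Pairwise r) : l₁ = l₂ :=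
  hp.eq_of_pairwise' h1 h2

section Aux

variable {R : Type*} [Ring R] {ι : Type*}

private lemma aux_central_prod (g : ι → R) (pc : ι → Bool)
    (hc : ∀ i, pc i = true → ∀ y : R, g i * y = y * g i) :
    ∀ l : List ι, (∀ i ∈ l, pc i = true) → ∀ y : R,
      (l.map g).prod * y = y * (l.map g).prod := by
  intro l
  induction l with
  | nil => simp
  | cons a t ih =>
    intro h y
    simp only [List.map_cons, List.prod_cons]
    have ha := hc a (h a (List.mem_cons_self (a := a) (l := t)))
    have ht := ih (fun i hi => h i (List.mem_cons_of_mem a hi))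
    rw [mul_assoc, ht y, ← mul_assoc, ha y, mul_assoc]

private lemma aux_split (g : ι → R) (pc : ι → Bool)
    (hc : ∀ i, pc i = true → ∀ y : R, g i * y = y * g i) :
    ∀ l : List ι,
      (l.map g).prod =
        ((l.filter pc).map g).prod * ((l.filter (fun i => !pc i)).map g).prod := by
  intro l
  induction l with
  | nil => simp
  | cons a t ih =>
    by_cases hpc : pc a = true
    · have h1 : (a :: t).filter pc = a :: t.filter pc := by simp [List.filter_cons, hpc]
      have h2 : (a :: t).filter (fun i => !pc i) = t.filter (fun i => !pc i) := by
        simp [List.filter_cons, hpc]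
      rw [h1, h2, List.map_cons, List.prod_cons, List.map_cons, List.prod_cons, ih, mul_assoc]
    · have hpc' : pc a = false := by simpa using hpc
      have h1 : (a :: t).filter pc = t.filter pc := by simp [List.filter_cons, hpc']
      have h2 : (a :: t).filter (fun i => !pc i) = a :: t.filter (fun i => !pc i) := by
        simp [List.filter_cons, hpc']
      have hT : ∀ y : R, ((t.filter pc).map g).prod * y = y * ((t.filter pc).map g).prod :=
        aux_central_prod g pc hc _ (fun i hi => (List.mem_filter.mp hi).2)
      rw [h1, h2, List.map_cons, List.prod_cons, List.map_cons, List.prod_cons, ih,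
        ← mul_assoc, ← hT (g a), mul_assoc]

private lemma key_lemma {n : ℕ} (π : Equiv.Perm (Fin n)) (f : Fin n → R)
    (h1 : ∀ i : Fin n, (π i : ℕ) ≤ (i : ℕ) + 1)
    (h2 : ∀ i : Fin n, (π i : ℕ) = (i : ℕ) + 1 → ∀ y : R, f i * y = y * f i) :
    (List.ofFn fun j => f (π⁻¹ j)).prod = (List.ofFn fun i => f i).prod := by
  classical
  set pc : Fin n → Bool := fun i => decide ((π i : ℕ) = (i : ℕ) + 1) with hpcdef
  have hcent : ∀ i, pc i = true → ∀ y : R, f i * y = y * f i := by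
    intro i hi y
    exact h2 i (by simpa [hpcdef] using hi) y
  have hle : ∀ i : Fin n, pc i = false → (π i : ℕ) ≤ (i : ℕ) := by
    intro i hi
    have h := h1 i
    have hne : ¬ ((π i : ℕ) = (i : ℕ) + 1) := by simpa [hpcdef] using hi
    omega
  -- the initial segment {0..i} is invariant whenever (π i : ℕ) ≤ i
  have inv : ∀ i k : Fin n, (π i : ℕ) ≤ (i : ℕ) →
      ((k : ℕ) ≤ (i : ℕ) ↔ (π k : ℕ) ≤ (i : ℕ)) := by
    intro i k hi
    set S : Finset (Fin n) := Finset.univ.filter (fun k : Fin n => (k : ℕ) ≤ (i : ℕ)) with hS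
    have hsub : S.image π ⊆ S := by
      intro x hx
      rw [Finset.mem_image] at hx
      obtain ⟨k', hk', rfl⟩ := hx
      rw [hS, Finset.mem_filter] at hk' ⊢
      refine ⟨Finset.mem_univ _, ?_⟩
      have hk'i := hk'.2
      have hk'1 := h1 k'
      by_contra hgt
      push_neg at hgt
      have heq : (k' : ℕ) = (i : ℕ) := by omega
      have : k' = i := Fin.val_injective heq
      subst this
      omega
    have himg : S.image π = S :=
      Finset.eq_of_subset_of_card_le hsub
        (le_of_eq (Finset.card_image_of_injective _ π.injective).symm)
    constructor
    · intro hk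
      have hmem : k ∈ S := by rw [hS, Finset.mem_filter]; exact ⟨Finset.mem_univ _, hk⟩
      have : π k ∈ S := himg ▸ Finset.mem_image_of_mem π hmem
      rw [hS, Finset.mem_filter] at this
      exact this.2
    · intro hk
      have : π k ∈ S := by rw [hS, Finset.mem_filter]; exact ⟨Finset.mem_univ _, hk⟩
      rw [← himg, Finset.mem_image] at this
      obtain ⟨k', hk', heq⟩ := this
      have : k' = k := π.injective heq
      subst this
      rw [hS, Finset.mem_filter] at hk'
      exact hk'.2
  -- strict monotonicity of π⁻¹ on the non-central indices
  have mono : ∀ a b : Fin n, pc (π⁻¹ a) = false → pc (π⁻¹ b) = false →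
      a < b → π⁻¹ a < π⁻¹ b := by
    intro a b hqa hqb hab
    have ha : (a : ℕ) ≤ ((π⁻¹ a : Fin n) : ℕ) := by
      have := hle _ hqa; rwa [Equiv.Perm.apply_inv_self] at this
    have hb : (b : ℕ) ≤ ((π⁻¹ b : Fin n) : ℕ) := by
      have := hle _ hqb; rwa [Equiv.Perm.apply_inv_self] at this
    rw [Fin.lt_def] at hab ⊢
    by_contra hge
    push_neg at hge
    have hne : ((π⁻¹ b : Fin n) : ℕ) ≠ ((π⁻¹ a : Fin n) : ℕ) := by
      intro h
      have : π⁻¹ b = π⁻¹ a := Fin.val_injective h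
      have : b = a := (Equiv.injective π⁻¹) this
      omega
    have hlt : ((π⁻¹ b : Fin n) : ℕ) < ((π⁻¹ a : Fin n) : ℕ) := lt_of_le_of_ne hge hne
    have hinv := inv (π⁻¹ b) (π⁻¹ a)
      (by rw [Equiv.Perm.apply_inv_self]; exact hb)
    rw [Equiv.Perm.apply_inv_self] at hinv
    have hna : ¬ (((π⁻¹ a : Fin n) : ℕ) ≤ ((π⁻¹ b : Fin n) : ℕ)) := by omega
    have : ¬ ((a : ℕ) ≤ ((π⁻¹ b : Fin n) : ℕ)) := fun h => hna (hinv.mpr h)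
    omega
  -- rewrite both products via finRange
  have hperm : ((List.finRange n).map ⇑π⁻¹).Perm (List.finRange n) :=
    Equiv.Perm.map_finRange_perm π⁻¹
  have hcol : (List.ofFn fun j => f (π⁻¹ j)) = ((List.finRange n).map ⇑π⁻¹).map f := by
    rw [List.map_map, List.ofFn_eq_map]
    rfl
  have hrow : (List.ofFn fun i => f i) = (List.finRange n).map f := List.ofFn_eq_map
  rw [hcol, hrow, aux_split f pc hcent ((List.finRange n).map ⇑π⁻¹),
    aux_split f pc hcent (List.finRange n)]
  congr 1
  · -- central parts: permutation of pairwise commuting lists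
    have p1 : (((List.finRange n).map ⇑π⁻¹).filter pc).Perm ((List.finRange n).filter pc) :=
      hperm.filter pc
    refine (p1.map f).prod_eq' ?_
    apply List.pairwise_of_forall_mem_list
    intro x hx y _
    rw [List.mem_map] at hx
    obtain ⟨i, hi, rfl⟩ := hx
    have : pc i = true := (List.mem_filter.mp hi).2
    exact hcent i this y
  · -- non-central parts: the lists are literally equal
    congr 1
    congr 1
    rw [List.filter_map]
    refine List.eq_of_perm_of_sorted (r := (· < · : Fin n → Fin n → Prop)) ?_ ?_ ?_
    · rw [List.perm_ext_iff_of_nodup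
        (List.Nodup.map (Equiv.injective π⁻¹) (List.Nodup.filter _ (List.nodup_finRange n)))
        (List.Nodup.filter _ (List.nodup_finRange n))]
      intro a
      simp only [List.mem_map, List.mem_filter, List.mem_finRange, true_and]
      constructor
      · rintro ⟨j, hj, rfl⟩
        simpa using hj
      · intro hpa
        exact ⟨π a, by simpa using hpa, Equiv.Perm.inv_apply_self π a⟩
    · -- sortedness of the mapped list
      apply List.pairwise_map.mpr
      refine List.Pairwise.imp_of_mem ?_ ((List.pairwise_lt_finRange n).filter _)
      intro a b ha hb hab
      have ha' : pc (π⁻¹ a) = false := by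
        have := (List.mem_filter.mp ha).2
        simpa using this
      have hb' : pc (π⁻¹ b) = false := by
        have := (List.mem_filter.mp hb).2
        simpa using this
      exact mono a b ha' hb' hab
    · exact (List.pairwise_lt_finRange n).filter _

end Aux

/-- for an `n×n` matrix `A` over a (possibly noncommutative) ring with
`A_{ij} = 0` for `j > i+1` and central superdiagonal entries `A_{i,i+1}`, the
column-determinant equals the row-determinant:
`Σ_σ sgn(σ)·A_{σ(1)1}⋯A_{σ(n)n} = Σ_σ sgn(σ)·A_{1σ(1)}⋯A_{nσ(n)}`. -/
theorem cdet_eq_rdet_hessenberg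
    {R : Type*} [Ring R] (n : ℕ)
    (A : Matrix (Fin n) (Fin n) R)
    (hA : ∀ i j : Fin n, (i : ℕ) + 1 < (j : ℕ) → A i j = 0)
    (hcentral : ∀ i j : Fin n, (j : ℕ) = (i : ℕ) + 1 → ∀ x : R, A i j * x = x * A i j) :
    (∑ σ : Equiv.Perm (Fin n),
        (Equiv.Perm.sign σ : ℤ) • (List.ofFn fun j : Fin n => A (σ j) j).prod)
      = ∑ σ : Equiv.Perm (Fin n),
          (Equiv.Perm.sign σ : ℤ) • (List.ofFn fun i : Fin n => A i (σ i)).prod := by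
  have hre : (∑ σ : Equiv.Perm (Fin n),
        (Equiv.Perm.sign σ : ℤ) • (List.ofFn fun i : Fin n => A i (σ i)).prod)
      = ∑ σ : Equiv.Perm (Fin n),
        (Equiv.Perm.sign σ : ℤ) • (List.ofFn fun i : Fin n => A i (σ⁻¹ i)).prod := by
    rw [← Equiv.sum_comp (Equiv.inv (Equiv.Perm (Fin n)))
      (fun σ => (Equiv.Perm.sign σ : ℤ) • (List.ofFn fun i : Fin n => A i (σ i)).prod)]
    refine Finset.sum_congr rfl (fun σ _ => ?_)
    simp [Equiv.inv_apply, Equiv.Perm.sign_inv]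
  rw [hre]
  refine Finset.sum_congr rfl (fun σ _ => ?_)
  congr 1
  by_cases hσ : ∀ j : Fin n, (j : ℕ) ≤ (σ j : ℕ) + 1
  · have h1 : ∀ i : Fin n, ((σ⁻¹ i : Fin n) : ℕ) ≤ (i : ℕ) + 1 := by
      intro i
      have := hσ (σ⁻¹ i)
      rwa [Equiv.Perm.apply_inv_self] at this
    have h2 : ∀ i : Fin n, ((σ⁻¹ i : Fin n) : ℕ) = (i : ℕ) + 1 →
        ∀ y : R, A i (σ⁻¹ i) * y = y * A i (σ⁻¹ i) := by
      intro i hi y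
      exact hcentral i (σ⁻¹ i) hi y
    have := key_lemma σ⁻¹ (fun i => A i (σ⁻¹ i)) h1 h2
    simpa [Equiv.Perm.inv_apply_self] using this
  · push_neg at hσ
    obtain ⟨j, hj⟩ := hσ
    have h0 : A (σ j) j = 0 := hA _ _ hj
    have hL : (List.ofFn fun j : Fin n => A (σ j) j).prod = 0 := by
      apply List.prod_eq_zero
      rw [List.mem_ofFn]
      exact ⟨j, h0⟩
    have hR : (List.ofFn fun i : Fin n => A i (σ⁻¹ i)).prod = 0 := by
      apply List.prod_eq_zero
      rw [List.mem_ofFn]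
      exact ⟨σ j, by simpa [Equiv.Perm.inv_apply_self] using h0⟩
    rw [hL, hR]
end
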